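/- arXiv:1602.03700 — 4 statements merged into one kernel-verified Lean document; each statement's English description precedes it below -/
import Mathlib

section
/- Let R be a discrete valuation ring with uniformizer t, and let X be a flat R-scheme such that the special fibre X_k is reduced. Then for every affine open W of X, the ring O_X(W) is integrally closed in O_X(W)[t^{-1}]; in particular, if g ∈ O_X(W)[t^{-1}] satisfies a monic polynomial with coefficients in O_X(W), then g ∈ O_X(W). -/
universe u

open CategoryTheory Limits AlgebraicGeometry
open scoped TensorProduct

/-- Integral closedness in the localization away from a regular element `τ` such that
`A/τ` has the relevant radical property. -/
theorem aux_integrally_closed {A : Type u} [CommRing A] (τ : A) (hτ : τ ∈ nonZeroDivisors A)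
    (hrad : ∀ (a : A) (n : ℕ), a ^ n ∈ Ideal.span {τ} → a ∈ Ideal.span {τ}) :
    ∀ g : Localization.Away τ, IsIntegral A g →
      ∃ a : A, algebraMap A (Localization.Away τ) a = g := by
  classical
  set L := Localization.Away τ with hL
  have hinj : Function.Injective (algebraMap A L) :=
    IsLocalization.injective (M := Submonoid.powers τ) L (Submonoid.powers_le.mpr hτ)
  intro g hg
  obtain ⟨p, hp, hpg⟩ := hg
  have key : ∀ (n : ℕ) (a : A), g * algebraMap A L (τ ^ n) = algebraMap A L a →
      ∃ b : A, algebraMap A L b = g := by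
    intro n
    induction n with
    | zero => intro a h; exact ⟨a, by simpa using h.symm⟩
    | succ n ih =>
      intro a h
      have h1 : Polynomial.eval₂ (algebraMap A L) (algebraMap A L (τ ^ (n+1)) * g)
          (p.scaleRoots (τ ^ (n+1))) = 0 := Polynomial.scaleRoots_eval₂_eq_zero _ hpg
      rw [mul_comm, h, Polynomial.eval₂_at_apply] at h1
      have h2 : (p.scaleRoots (τ ^ (n+1))).eval a = 0 := hinj (by simpa using h1)
      set q := p.scaleRoots (τ ^ (n+1)) with hq
      have hdeg : q.natDegree = p.natDegree := Polynomial.natDegree_scaleRoots _ _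
      have hsum : (0:A) = (∑ i ∈ Finset.range p.natDegree, q.coeff i * a ^ i)
          + q.coeff p.natDegree * a ^ p.natDegree := by
        rw [← Finset.sum_range_succ, ← h2, Polynomial.eval_eq_sum_range, hdeg]
      have hlead : q.coeff p.natDegree = 1 := by
        rw [hq, Polynomial.coeff_scaleRoots_natDegree]; exact hp
      rw [hlead, one_mul] at hsum
      have hmem : a ^ p.natDegree ∈ Ideal.span {τ} := by
        have hx : a ^ p.natDegree
            = -∑ i ∈ Finset.range p.natDegree, q.coeff i * a ^ i :=
          eq_neg_of_add_eq_zero_right hsum.symm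
        rw [hx]
        refine neg_mem (Ideal.sum_mem _ fun i hi => Ideal.mul_mem_right _ _ ?_)
        rw [hq, Polynomial.coeff_scaleRoots]
        refine Ideal.mul_mem_left _ _ (Ideal.mem_span_singleton.mpr ?_)
        exact dvd_trans (dvd_pow_self τ (Nat.succ_ne_zero n))
          (dvd_pow_self _ (Nat.sub_ne_zero_of_lt (Finset.mem_range.mp hi)))
      obtain ⟨b, hb⟩ := Ideal.mem_span_singleton.mp (hrad a _ hmem)
      have hu : IsUnit (algebraMap A L τ) :=
        IsLocalization.map_units (M := Submonoid.powers τ) L ⟨τ, Submonoid.mem_powers τ⟩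
      refine ih b (hu.mul_left_cancel ?_)
      calc algebraMap A L τ * (g * algebraMap A L (τ ^ n))
          = g * algebraMap A L (τ ^ (n+1)) := by
            rw [← mul_assoc, mul_comm (algebraMap A L τ) g, mul_assoc, ← map_mul,
              ← pow_succ']
        _ = algebraMap A L a := h
        _ = algebraMap A L τ * algebraMap A L b := by rw [hb, map_mul]
  obtain ⟨⟨a, s⟩, hs⟩ := IsLocalization.surj (M := Submonoid.powers τ) g
  obtain ⟨n, hn⟩ := s.2
  exact key n a (by rw [show τ ^ n = (s : A) from hn]; exact hs)

/-- A scheme `X` over `Spec R` is flat over `R` if for every affine open `W ⊆ X` the ring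
of sections `O_X(W)` is a flat `R`-module. -/
def FlatOverBase (R : Type u) [CommRing R] (X : Scheme.{u})
    (f : X ⟶ Spec (CommRingCat.of R)) : Prop :=
  ∀ W : X.Opens, IsAffineOpen W →
    letI : Algebra R (X.presheaf.obj (Opposite.op W)) :=
      (((Scheme.ΓSpecIso (CommRingCat.of R)).inv ≫ f.appTop ≫
        X.presheaf.map (homOfLE (le_top : W ≤ ⊤)).op) : CommRingCat.of R ⟶ _).hom.toAlgebra
    Module.Flat R (X.presheaf.obj (Opposite.op W))

/-- Let `R` be a discrete valuation ring with uniformizer `t` and let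
`X` be a flat `R`-scheme whose special fibre is reduced.  Then for every affine open
`W ⊆ X` the ring `O_X(W)` is integrally closed in `O_X(W)[t⁻¹]`: every element of the
localization away from (the image of) `t` that satisfies a monic polynomial with
coefficients in `O_X(W)` lies in `O_X(W)`. -/
theorem statement2 (R : Type u) [CommRing R] [IsDomain R] [IsDiscreteValuationRing R]
    (t : R) (ht : Irreducible t)
    (X : Scheme.{u}) (f : X ⟶ Spec (CommRingCat.of R))
    (hflat : FlatOverBase R X f)
    (hred : IsReduced (pullback f
      (Spec.map (CommRingCat.ofHom (IsLocalRing.residue R)))))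
    (W : X.Opens) (hW : IsAffineOpen W) :
    ∀ g : Localization.Away
        ((((Scheme.ΓSpecIso (CommRingCat.of R)).inv ≫ f.appTop ≫
          X.presheaf.map (homOfLE (le_top : W ≤ ⊤)).op) :
            CommRingCat.of R ⟶ X.presheaf.obj (Opposite.op W)) t),
      IsIntegral (X.presheaf.obj (Opposite.op W)) g →
        ∃ a : X.presheaf.obj (Opposite.op W),
          algebraMap (X.presheaf.obj (Opposite.op W)) _ a = g := by
  classical
  intro g hg
  refine aux_integrally_closed _ ?_ ?_ g hg
  · -- the image of t is a nonzerodivisor, by flatness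
    letI : Algebra R (X.presheaf.obj (Opposite.op W)) :=
      (((Scheme.ΓSpecIso (CommRingCat.of R)).inv ≫ f.appTop ≫
        X.presheaf.map (homOfLE (le_top : W ≤ ⊤)).op) : CommRingCat.of R ⟶ _).hom.toAlgebra
    haveI hAflat : Module.Flat R (X.presheaf.obj (Opposite.op W)) := hflat W hW
    have htR : IsSMulRegular R t := by
      intro x y hxy
      have h : t * x = t * y := hxy
      exact mul_left_cancel₀ ht.ne_zero h
    have htA : IsSMulRegular (X.presheaf.obj (Opposite.op W) : Type u) t := by
      have h1 : IsSMulRegular ((X.presheaf.obj (Opposite.op W) : Type u) ⊗[R] R) t :=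
        htR.lTensor _
      exact h1.of_injective (TensorProduct.rid R _).symm.toLinearMap
        (TensorProduct.rid R _).symm.injective
    rw [mem_nonZeroDivisors_iff_right]
    intro x hx
    refine htA ?_
    show t • x = t • (0 : (X.presheaf.obj (Opposite.op W) : Type u))
    rw [smul_zero, Algebra.smul_def, mul_comm]
    exact hx
  · -- radical property from reducedness of the special fibre
    set φ : CommRingCat.of R ⟶ X.presheaf.obj (Opposite.op W) :=
      (Scheme.ΓSpecIso (CommRingCat.of R)).inv ≫ f.appTop ≫
        X.presheaf.map (homOfLE (le_top : W ≤ ⊤)).op with hφ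
    letI : Algebra R (X.presheaf.obj (Opposite.op W)) := φ.hom.toAlgebra
    haveI : IsAffine W.toScheme := hW
    have hψ : CommRingCat.ofHom (algebraMap R (X.presheaf.obj (Opposite.op W))) = φ := rfl
    have hres : CommRingCat.ofHom (algebraMap R (IsLocalRing.ResidueField R))
        = CommRingCat.ofHom (IsLocalRing.residue R) := rfl
    have hring : φ ≫ W.topIso.inv
        = (Scheme.ΓSpecIso (CommRingCat.of R)).inv ≫ (W.ι ≫ f).appTop := by
      rw [Scheme.Hom.comp_appTop, hφ, Category.assoc, Category.assoc]
      congr 1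
      congr 1
      rw [Scheme.Opens.ι_appTop, Scheme.Opens.topIso_inv]
      exact (X.presheaf.map_comp _ _).symm
    have hiso : W.ι ≫ f = hW.isoSpec.hom ≫ Spec.map φ := by
      have h1 := Scheme.isoSpec_hom_naturality (W.ι ≫ f)
      rw [Scheme.isoSpec_Spec_hom] at h1
      have h2 : W.ι ≫ f = W.toScheme.isoSpec.hom ≫ Spec.map ((W.ι ≫ f).appTop) ≫
          Spec.map (Scheme.ΓSpecIso (CommRingCat.of R)).inv := by
        rw [← Category.assoc, h1, Category.assoc, ← Spec.map_comp, Iso.inv_hom_id,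
          Spec.map_id, Category.comp_id]
      rw [h2]
      show _ = (W.toScheme.isoSpec ≪≫ Scheme.Spec.mapIso W.topIso.symm.op).hom ≫ Spec.map φ
      simp only [Iso.trans_hom, Functor.mapIso_hom, Iso.op_hom, Iso.symm_hom, Category.assoc]
      congr 1
      show Spec.map ((W.ι ≫ f).appTop) ≫ Spec.map (Scheme.ΓSpecIso (CommRingCat.of R)).inv
        = Spec.map W.topIso.inv ≫ Spec.map φ
      rw [← Spec.map_comp, ← Spec.map_comp, hring]
    haveI hredQ : IsReduced (pullback W.ι
        (pullback.fst f (Spec.map (CommRingCat.ofHom (IsLocalRing.residue R))))) :=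
      isReduced_of_isOpenImmersion (pullback.snd W.ι
        (pullback.fst f (Spec.map (CommRingCat.ofHom (IsLocalRing.residue R)))))
    let e2 := pullbackRightPullbackFstIso f
      (Spec.map (CommRingCat.ofHom (IsLocalRing.residue R))) W.ι
    let e3 : pullback (W.ι ≫ f) (Spec.map (CommRingCat.ofHom (IsLocalRing.residue R)))
        ≅ pullback (Spec.map φ) (Spec.map (CommRingCat.ofHom (IsLocalRing.residue R))) :=
      asIso (pullback.map _ _ _ _ hW.isoSpec.hom (𝟙 _) (𝟙 _)
        (by rw [hiso]; simp) (by simp))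
    let e4 : pullback (Spec.map φ) (Spec.map (CommRingCat.ofHom (IsLocalRing.residue R)))
        ≅ Spec (CommRingCat.of ((X.presheaf.obj (Opposite.op W) : Type u)
            ⊗[R] IsLocalRing.ResidueField R)) := by
      rw [← hψ, ← hres]
      exact pullbackSpecIso R (X.presheaf.obj (Opposite.op W) : Type u)
        (IsLocalRing.ResidueField R)
    haveI hredSpec : IsReduced (Spec (CommRingCat.of
        ((X.presheaf.obj (Opposite.op W) : Type u) ⊗[R] IsLocalRing.ResidueField R))) :=
      isReduced_of_isOpenImmersion (e4.inv ≫ e3.inv ≫ e2.inv)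
    haveI hredT : IsReduced
        ((X.presheaf.obj (Opposite.op W) : Type u) ⊗[R] IsLocalRing.ResidueField R) :=
      (affine_isReduced_iff _).mp hredSpec
    intro a n han
    obtain ⟨b, hb⟩ := Ideal.mem_span_singleton.mp han
    have h1 : (a ⊗ₜ[R] (1 : IsLocalRing.ResidueField R)) ^ n = 0 := by
      rw [Algebra.TensorProduct.tmul_pow, one_pow, hb]
      have hsm : φ t * b = t • b := by rw [Algebra.smul_def]; rfl
      rw [hsm, TensorProduct.smul_tmul]
      have ht0 : t • (1 : IsLocalRing.ResidueField R) = 0 := by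
        have h : t • (1 : IsLocalRing.ResidueField R) = IsLocalRing.residue R t := by
          rw [Algebra.smul_def, mul_one]; rfl
        rw [h]
        exact Ideal.Quotient.eq_zero_iff_mem.mpr
          ((IsLocalRing.mem_maximalIdeal t).mpr (mem_nonunits_iff.mpr ht.not_isUnit))
      rw [ht0, TensorProduct.tmul_zero]
    have h2 : a ⊗ₜ[R] (1 : IsLocalRing.ResidueField R) = 0 :=
      IsNilpotent.eq_zero ⟨n, h1⟩
    have h3 := congrArg (TensorProduct.tensorQuotEquivQuotSMul
      (X.presheaf.obj (Opposite.op W) : Type u) (IsLocalRing.maximalIdeal R)) h2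
    erw [LinearEquiv.map_zero (TensorProduct.tensorQuotEquivQuotSMul
      (X.presheaf.obj (Opposite.op W) : Type u) (IsLocalRing.maximalIdeal R))] at h3
    have h4 : (1 : IsLocalRing.ResidueField R)
        = Ideal.Quotient.mk (IsLocalRing.maximalIdeal R) 1 := rfl
    erw [h4, TensorProduct.tensorQuotEquivQuotSMul_tmul_mk, one_smul] at h3
    have h5 : a ∈ (IsLocalRing.maximalIdeal R • ⊤ :
        Submodule R (X.presheaf.obj (Opposite.op W) : Type u)) :=
      (Submodule.Quotient.mk_eq_zero _).mp h3
    rw [ht.maximalIdeal_eq] at h5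
    rw [Ideal.mem_span_singleton]
    refine Submodule.smul_induction_on h5 ?_ ?_
    · intro r hr x _
      obtain ⟨c, hc⟩ := Ideal.mem_span_singleton.mp hr
      refine ⟨c • x, ?_⟩
      rw [hc, mul_smul, Algebra.smul_def]
      rfl
    · intro x y hx hy
      exact dvd_add hx hy
end

section
/- Let A be a commutative ring in which an element t is not a zero divisor, and suppose A/tA is reduced. Then A is integrally closed in A[t^{-1}]. -/
open Polynomial Finset

lemma aux3 {A : Type*} [CommRing A] (t : A)
    (ht : t ∈ nonZeroDivisors A)
    (hred : IsReduced (A ⧸ Ideal.span ({t} : Set A))) :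
    ∀ n : ℕ, ∀ x : Localization.Away t, IsIntegral A x →
      ∀ a : A, x * algebraMap A (Localization.Away t) t ^ n = algebraMap A _ a →
      ∃ b : A, algebraMap A (Localization.Away t) b = x := by
  intro n
  induction n with
  | zero =>
    intro x _ a hx
    exact ⟨a, by simpa using hx.symm⟩
  | succ m ih =>
    intro x hint a hx
    obtain ⟨p, hmonic, hp0⟩ := hint
    have hp : aeval x p = 0 := hp0
    set f := algebraMap A (Localization.Away t) with hf
    set d := p.natDegree with hd
    rcases Nat.eq_zero_or_pos d with hd0 | hdpos
    · have hp1 : p = 1 := hmonic.natDegree_eq_zero.mp hd0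
      rw [hp1, map_one] at hp
      haveI : Subsingleton (Localization.Away t) := subsingleton_of_zero_eq_one hp.symm
      exact ⟨0, Subsingleton.elim _ _⟩
    · set r := p.eraseLead with hr
      have hdeg : r.natDegree < d :=
        lt_of_le_of_lt p.eraseLead_natDegree_le (Nat.sub_lt hdpos one_pos)
      have h1 : aeval x r + x ^ d = 0 := by
        have h2 : aeval x (r + Polynomial.monomial d p.leadingCoeff) = 0 := by
          rw [hr, hd, p.eraseLead_add_monomial_natDegree_leadingCoeff]; exact hp
        simpa [hmonic.leadingCoeff, Polynomial.aeval_monomial] using h2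
      have hxd : x ^ d = - aeval x r := by linear_combination h1
      have hsum : aeval x r = ∑ i ∈ Finset.range d, r.coeff i • x ^ i :=
        Polynomial.aeval_eq_sum_range' hdeg x
      have key : f (a ^ d) = f (-∑ i ∈ Finset.range d, r.coeff i * a ^ i * t ^ ((m+1)*(d-i))) := by
        rw [map_pow, ← hx, mul_pow, ← pow_mul, hxd, hsum, map_neg, map_sum, neg_mul,
          Finset.sum_mul]
        congr 1
        refine Finset.sum_congr rfl fun i hi => ?_
        rw [Finset.mem_range] at hi
        have hsplit : (m+1) * d = (m+1) * i + (m+1) * (d - i) := by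
          rw [← Nat.mul_add, Nat.add_sub_cancel' hi.le]
        rw [hsplit, pow_add, Algebra.smul_def]
        have hxi : x ^ i * f t ^ ((m+1) * i) = f (a ^ i) := by
          rw [pow_mul, ← mul_pow, hx, map_pow]
        rw [map_mul, map_mul, map_pow]
        rw [← map_pow f a i, ← hxi, map_pow f t]
        ring
      have hinj : Function.Injective f :=
        IsLocalization.injective (Localization.Away t) ((Submonoid.powers_le).mpr ht)
      have keyA : a ^ d = -∑ i ∈ Finset.range d, r.coeff i * a ^ i * t ^ ((m+1)*(d-i)) :=
        hinj key
      have hdvd : t ∣ a ^ d := by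
        rw [keyA]
        refine dvd_neg.mpr (Finset.dvd_sum fun i hi => ?_)
        rw [Finset.mem_range] at hi
        exact (dvd_pow_self t
          (Nat.mul_ne_zero (Nat.succ_ne_zero m) (Nat.sub_ne_zero_of_lt hi))).mul_left _
      have hmem : a ∈ Ideal.span ({t} : Set A) := by
        have hnil : IsNilpotent (Ideal.Quotient.mk (Ideal.span ({t} : Set A)) a) := by
          refine ⟨d, ?_⟩
          rw [← map_pow, Ideal.Quotient.eq_zero_iff_mem]
          exact Ideal.mem_span_singleton.mpr hdvd
        have := hred.eq_zero _ hnil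
        rwa [Ideal.Quotient.eq_zero_iff_mem] at this
      obtain ⟨b, hb⟩ := Ideal.mem_span_singleton.mp hmem
      have hx' : x * f t ^ m = f b := by
        have hu : IsUnit (f t) := IsLocalization.map_units (Localization.Away t)
          ⟨t, Submonoid.mem_powers t⟩
        apply hu.mul_left_cancel
        calc f t * (x * f t ^ m) = x * f t ^ (m+1) := by ring
          _ = f a := hx
          _ = f t * f b := by rw [hb, map_mul]
      exact ih x ⟨p, hmonic, hp0⟩ b hx'

/-- Let `A` be a commutative ring, `t ∈ A` a non-zerodivisor such that
`A/tA` is reduced.  Then `A` is integrally closed in `A[t⁻¹]`: every element of the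
localization of `A` away from `t` which is integral over `A` lies in (the image of) `A`. -/
theorem statement3 {A : Type*} [CommRing A] (t : A)
    (ht : t ∈ nonZeroDivisors A)
    (hred : IsReduced (A ⧸ Ideal.span ({t} : Set A))) :
    ∀ x : Localization.Away t, IsIntegral A x →
      ∃ a : A, algebraMap A (Localization.Away t) a = x := by
  intro x hx
  obtain ⟨⟨a, s⟩, ha⟩ := IsLocalization.surj (Submonoid.powers t) x
  obtain ⟨n, hn⟩ := s.2
  refine aux3 t ht hred n x hx a ?_
  have : (s : A) = t ^ n := hn.symm
  simpa [← map_pow, ← this] using ha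
end

section
/- Let (G,l) be a finite connected graph with edge labels in ℤ_{≥1}, with nullity r. The Smith normal form of the labelled circuit matrix M_{(G,l)} has all r nonzero diagonal entries equal to 1 if and only if (G,l) is circuit-coprime. -/
/-- A multigraph: vertices `V`, edges `E`, source/target maps (loops and multiple
edges allowed). -/
structure Multigraph (V E : Type*) where
  s : E → V
  t : E → V

namespace Multigraph

variable {V E : Type*} (G : Multigraph V E)

/-- The edge `e` has endpoints `a` and `b`. -/
def Connects (e : E) (a b : V) : Prop :=
  (G.s e = a ∧ G.t e = b) ∨ (G.s e = b ∧ G.t e = a)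

/-- Two vertices are connected by a walk using only edges from `F`. -/
def ReachableIn (F : Set E) : V → V → Prop :=
  Relation.ReflTransGen (fun a b => ∃ e ∈ F, G.Connects e a b)

/-- The graph is connected. -/
def Connected : Prop := ∀ a b : V, G.ReachableIn Set.univ a b

/-- The cyclic successor on `Fin m`. -/
def cyc {m : ℕ} (i : Fin m) : Fin m :=
  ⟨(i.1 + 1) % m, Nat.mod_lt _ (Nat.lt_of_le_of_lt (Nat.zero_le _) i.isLt)⟩

/-- A circuit: a closed walk with all edges and vertices distinct. -/
def IsCircuit {m : ℕ} (v : Fin m → V) (ed : Fin m → E) : Prop :=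
  0 < m ∧ Function.Injective v ∧ Function.Injective ed ∧
    ∀ i, G.Connects (ed i) (v i) (v (cyc i))

/-- A set of edges `F` is a spanning tree: the subgraph `(V, F)` is connected and has
no circuit. -/
def SpanningTree (F : Set E) : Prop :=
  (∀ a b : V, G.ReachableIn F a b) ∧
    ∀ (m : ℕ) (v : Fin m → V) (ed : Fin m → E),
      G.IsCircuit v ed → ¬ Set.range ed ⊆ F

/-- `(G, l)` is circuit-coprime: the labels of the edges of any circuit have gcd `1`. -/
def CircuitCoprime (l : E → ℕ) : Prop :=
  ∀ (m : ℕ) (v : Fin m → V) (ed : Fin m → E), G.IsCircuit v ed →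
    Finset.univ.gcd (fun i : Fin m => l (ed i)) = 1

/-- `x : E → ℤ` is the signed incidence (row) vector of an oriented circuit of `G`:
it takes the value `±1` on the edges of the circuit (according to whether the orientation of
the edge agrees with the travelling direction of the circuit) and `0` elsewhere. -/
def IsCircuitVector (x : E → ℤ) : Prop :=
  ∃ (m : ℕ) (v : Fin m → V) (ed : Fin m → E), G.IsCircuit v ed ∧
    (∀ i, (G.s (ed i) = v i ∧ G.t (ed i) = v (cyc i) ∧ x (ed i) = 1) ∨
        (G.s (ed i) = v (cyc i) ∧ G.t (ed i) = v i ∧ x (ed i) = -1)) ∧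
    ∀ e, e ∉ Set.range ed → x e = 0

end Multigraph

section AuxWalk


def cyc' {m : ℕ} (i : Fin m) : Fin m :=
  ⟨(i.1 + 1) % m, Nat.mod_lt _ (Nat.lt_of_le_of_lt (Nat.zero_le _) i.isLt)⟩

lemma cyc'_cases {m : ℕ} (k : Fin m) :
    ((cyc' k).1 = k.1 + 1 ∧ k.1 + 1 < m) ∨ ((cyc' k).1 = 0 ∧ k.1 + 1 = m) := by
  have hk := k.isLt
  rcases Nat.lt_or_ge (k.1 + 1) m with h | h
  · exact Or.inl ⟨Nat.mod_eq_of_lt h, h⟩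
  · have : k.1 + 1 = m := by omega
    exact Or.inr ⟨by show (k.1 + 1) % m = 0; rw [this, Nat.mod_self], this⟩

theorem walk_lemma {V E D : Type*} [Fintype V] (σ τ : D → V) (π : D → E)
    (Hπ : ∀ d d', π d = π d' → (σ d = σ d' ∧ τ d = τ d') ∨ (σ d = τ d' ∧ τ d = σ d'))
    (H : ∀ d, ∃ d', σ d' = τ d ∧ (π d' ≠ π d ∨ σ d = τ d)) (d0 : D) :
    ∃ (m : ℕ) (v : Fin m → V) (dd : Fin m → D), 0 < m ∧ Function.Injective v ∧
      Function.Injective (fun i => π (dd i)) ∧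
      ∀ i, σ (dd i) = v i ∧ τ (dd i) = v (cyc' i) := by
  classical
  choose f hf1 hf2 using H
  set ds : ℕ → D := fun n => f^[n] d0 with hds
  set vs : ℕ → V := fun n => σ (ds n) with hvs
  have hstep : ∀ n, ds (n + 1) = f (ds n) := fun n => Function.iterate_succ_apply' f n d0
  have hτ : ∀ n, τ (ds n) = vs (n + 1) := by
    intro n
    rw [hvs]; simp only; rw [hstep n, hf1]
  -- pigeonhole
  have hpig : ∃ a b : ℕ, a < b ∧ vs a = vs b := by
    obtain ⟨i, j, hij, hvij⟩ := Fintype.exists_ne_map_eq_of_card_lt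
      (fun i : Fin (Fintype.card V + 1) => vs i.1) (by simp)
    rcases Nat.lt_or_ge i.1 j.1 with h | h
    · exact ⟨i.1, j.1, h, hvij⟩
    · have : j.1 < i.1 := lt_of_le_of_ne h (fun hc => hij (Fin.ext hc.symm))
      exact ⟨j.1, i.1, this, hvij.symm⟩
  have hP : ∃ b, ∃ a, a < b ∧ vs a = vs b := by
    obtain ⟨a, b, h1, h2⟩ := hpig; exact ⟨b, a, h1, h2⟩
  set j0 := Nat.find hP with hj0
  obtain ⟨i0, hi0lt, hvi0⟩ := Nat.find_spec hP
  have hmin : ∀ b, b < j0 → ∀ a, a < b → vs a ≠ vs b := by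
    intro b hb a hab
    have := Nat.find_min hP hb
    push_neg at this
    exact this a hab
  set m := j0 - i0 with hm
  have hmpos : 0 < m := by omega
  set v : Fin m → V := fun k => vs (i0 + k.1) with hv
  set dd : Fin m → D := fun k => ds (i0 + k.1) with hdd
  have hvinj : Function.Injective v := by
    intro k k' hkk'
    by_contra hne
    have h1 : k.1 ≠ k'.1 := fun h => hne (Fin.ext h)
    have hk := k.isLt; have hk' := k'.isLt
    rcases Nat.lt_or_ge k.1 k'.1 with h | h
    · exact hmin (i0 + k'.1) (by omega) (i0 + k.1) (by omega) hkk'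
    · exact hmin (i0 + k.1) (by omega) (i0 + k'.1) (by omega) hkk'.symm
  have hσ : ∀ k, σ (dd k) = v k := fun k => rfl
  have hτ' : ∀ k, τ (dd k) = v (cyc' k) := by
    intro k
    have hk := k.isLt
    rw [hdd]; simp only; rw [hτ (i0 + k.1)]
    rcases cyc'_cases k with ⟨h1, h2⟩ | ⟨h1, h2⟩
    · rw [hv]; simp only [h1]; rfl
    · rw [hv]; simp only [h1]
      have : i0 + k.1 + 1 = j0 := by omega
      rw [this, Nat.add_zero]
      exact hvi0.symm
  -- injectivity of π ∘ dd
  have hconsec : ∀ k : ℕ, k + 1 < m → ∀ (hk : k < m) (hk1 : k + 1 < m),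
      π (dd ⟨k + 1, hk1⟩) ≠ π (dd ⟨k, hk⟩) := by
    intro k _ hk hk1
    have hd1 : dd ⟨k + 1, hk1⟩ = f (dd ⟨k, hk⟩) := by
      rw [hdd]; simp only
      rw [show i0 + (k + 1) = (i0 + k) + 1 by omega, hstep]
    rcases hf2 (dd ⟨k, hk⟩) with h | h
    · rw [hd1]; exact h
    · -- loop: σ = τ gives v ⟨k⟩ = v (cyc' ⟨k⟩), contradiction with injectivity
      exfalso
      have hvv : v ⟨k, hk⟩ = v (cyc' ⟨k, hk⟩) := by rw [← hσ, ← hτ', h]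
      have hkk := congrArg Fin.val (hvinj hvv)
      rcases cyc'_cases (⟨k, hk⟩ : Fin m) with ⟨hc1, hc2⟩ | ⟨hc1, hc2⟩ <;> omega
  have hcaseB : ∀ k k' : Fin m, k.1 < k'.1 → π (dd k) = π (dd k') →
      σ (dd k) = τ (dd k') → τ (dd k) = σ (dd k') → False := by
    intro k k' hlt hπeq h1 h2
    have hk := k.isLt; have hk' := k'.isLt
    have e1 : v k = v (cyc' k') := by rw [← hσ, ← hτ', h1]
    have e2 : v (cyc' k) = v k' := by rw [← hτ', ← hσ, h2]
    have e1' := congrArg Fin.val (hvinj e1)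
    have e2' := congrArg Fin.val (hvinj e2)
    rcases cyc'_cases k with ⟨hc1, hc2⟩ | ⟨hc1, hc2⟩
    · -- cyc' k = k+1, so k' = k+1 : consecutive
      have hkk' : k'.1 = k.1 + 1 := by omega
      have := hconsec k.1 (by omega) k.isLt (by omega)
      apply this
      have ha : (⟨k.1 + 1, by omega⟩ : Fin m) = k' := Fin.ext (by simp [hkk'])
      have hb : (⟨k.1, k.isLt⟩ : Fin m) = k := Fin.ext rfl
      rw [ha, hb]
      exact hπeq.symm
    · -- k+1 = m, cyc' k = 0 = k', but k' > k ≥ 0, contradiction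
      omega
  have hπinj : Function.Injective (fun i => π (dd i)) := by
    intro k k' hkk'
    simp only at hkk'
    by_contra hne
    rcases Hπ _ _ hkk' with ⟨h1, _⟩ | ⟨h1, h2⟩
    · exact hne (hvinj (by rw [← hσ, ← hσ, h1]))
    · have hval : k.1 ≠ k'.1 := fun h => hne (Fin.ext h)
      rcases Nat.lt_or_ge k.1 k'.1 with h | h
      · exact hcaseB k k' h hkk' h1 h2
      · exact hcaseB k' k (by omega) hkk'.symm h2.symm h1.symm
  exact ⟨m, v, dd, hmpos, hvinj, hπinj, fun i => ⟨hσ i, hτ' i⟩⟩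

end AuxWalk

namespace Multigraph

variable {V E : Type*} (G : Multigraph V E)

lemma cyc_val {m : ℕ} (i : Fin m) : (cyc i).1 = (i.1 + 1) % m := rfl

lemma cyc_bijective {m : ℕ} : Function.Bijective (cyc (m := m)) := by
  rcases Nat.eq_zero_or_pos m with hm | hm
  · subst hm; exact ⟨fun i => i.elim0, fun i => i.elim0⟩
  refine Finite.injective_iff_bijective.mp ?_
  intro i j h
  have h' : (i.1 + 1) % m = (j.1 + 1) % m := congrArg Fin.val h
  have hi := i.isLt; have hj := j.isLt
  have e1 : (i.1 + 1) % m = if i.1 + 1 = m then 0 else i.1 + 1 := by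
    split
    · simp [*]
    · exact Nat.mod_eq_of_lt (by omega)
  have e2 : (j.1 + 1) % m = if j.1 + 1 = m then 0 else j.1 + 1 := by
    split
    · simp [*]
    · exact Nat.mod_eq_of_lt (by omega)
  rw [e1, e2] at h'
  apply Fin.ext
  split at h' <;> split at h' <;> omega

open scoped Classical in
/-- divergence of `x` at vertex `a` -/
noncomputable def dvg [Fintype E] (x : E → ℤ) (a : V) : ℤ :=
  ∑ e, x e * ((if G.t e = a then 1 else 0) - (if G.s e = a then 1 else 0))

variable [Fintype E]

lemma dvg_add (x y : E → ℤ) (a : V) : G.dvg (x + y) a = G.dvg x a + G.dvg y a := by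
  simp [dvg, add_mul, Finset.sum_add_distrib]

lemma dvg_smul (r : ℤ) (x : E → ℤ) (a : V) : G.dvg (r • x) a = r * G.dvg x a := by
  simp [dvg, Finset.mul_sum, mul_assoc]

lemma dvg_circuitVector {x : E → ℤ} (hx : G.IsCircuitVector x) (a : V) :
    G.dvg x a = 0 := by
  classical
  obtain ⟨m, v, ed, ⟨hm, hv, hed, hconn⟩, hsign, hsupp⟩ := hx
  have h0 : ∀ e ∈ Finset.univ, e ∉ Finset.image ed Finset.univ →
      x e * ((if G.t e = a then 1 else 0) - (if G.s e = a then (1:ℤ) else 0)) = 0 := by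
    intro e _ he
    have : e ∉ Set.range ed := by
      intro ⟨i, hi⟩; exact he (Finset.mem_image.mpr ⟨i, Finset.mem_univ i, hi⟩)
    rw [hsupp e this]; ring
  have h1 : G.dvg x a = ∑ i : Fin m,
      ((if v (cyc i) = a then 1 else 0) - (if v i = a then (1:ℤ) else 0)) := by
    rw [dvg, ← Finset.sum_subset (Finset.subset_univ (Finset.image ed Finset.univ)) h0,
      Finset.sum_image (fun i _ j _ h => hed h)]
    refine Finset.sum_congr rfl fun i _ => ?_
    rcases hsign i with ⟨h1, h2, h3⟩ | ⟨h1, h2, h3⟩ <;> rw [h1, h2, h3] <;> ring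
  rw [h1, Finset.sum_sub_distrib,
    Function.Bijective.sum_comp cyc_bijective (fun j => if v j = a then (1:ℤ) else 0),
    sub_self]

lemma dvg_of_mem_span {c : E → ℤ}
    (hc : c ∈ Submodule.span ℤ {x | G.IsCircuitVector x}) (a : V) : G.dvg c a = 0 := by
  induction hc using Submodule.span_induction with
  | mem x hx => exact G.dvg_circuitVector hx a
  | zero => simp [dvg]
  | add x y _ _ hx hy => rw [G.dvg_add x y a, hx, hy, add_zero]
  | smul r x _ hx => rw [G.dvg_smul r x a, hx, mul_zero]

/-- From a circuit we can build a circuit vector supported exactly on it with unit values. -/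
lemma exists_circuitVector {m : ℕ} {v : Fin m → V} {ed : Fin m → E}
    (h : G.IsCircuit v ed) :
    ∃ x : E → ℤ, G.IsCircuitVector x ∧ (∀ i, x (ed i) = 1 ∨ x (ed i) = -1) ∧
      ∀ e, e ∉ Set.range ed → x e = 0 := by
  classical
  obtain ⟨hm, hv, hed, hconn⟩ := h
  set x : E → ℤ := fun e =>
    if he : ∃ i, ed i = e then (if G.s e = v he.choose then 1 else -1) else 0 with hxdef
  have hxi : ∀ i, x (ed i) = if G.s (ed i) = v i then 1 else -1 := by
    intro i
    have he : ∃ j, ed j = ed i := ⟨i, rfl⟩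
    have : he.choose = i := hed he.choose_spec
    simp only [hxdef, dif_pos he, this]
  have hsupp : ∀ e, e ∉ Set.range ed → x e = 0 := by
    intro e he
    have : ¬ ∃ i, ed i = e := fun ⟨i, hi⟩ => he ⟨i, hi⟩
    simp only [hxdef, dif_neg this]
  have hsign : ∀ i, (G.s (ed i) = v i ∧ G.t (ed i) = v (cyc i) ∧ x (ed i) = 1) ∨
      (G.s (ed i) = v (cyc i) ∧ G.t (ed i) = v i ∧ x (ed i) = -1) := by
    intro i
    rcases hconn i with ⟨h1, h2⟩ | ⟨h1, h2⟩
    · exact Or.inl ⟨h1, h2, by rw [hxi i, if_pos h1]⟩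
    · by_cases hs : G.s (ed i) = v i
      · -- then v (cyc i) = v i, so both coincide
        have : v (cyc i) = v i := by rw [← h1, hs]
        have hci : cyc i = i := hv this
        exact Or.inl ⟨hs, by rw [h2, hci], by rw [hxi i, if_pos hs]⟩
      · exact Or.inr ⟨h1, h2, by rw [hxi i, if_neg hs]⟩
  exact ⟨x, ⟨m, v, ed, ⟨hm, hv, hed, hconn⟩, hsign, hsupp⟩,
    fun i => by rw [hxi i]; split <;> simp, hsupp⟩




lemma cyc_cases {m : ℕ} (k : Fin m) :
    ((cyc k).1 = k.1 + 1 ∧ k.1 + 1 < m) ∨ ((cyc k).1 = 0 ∧ k.1 + 1 = m) :=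
  cyc'_cases k

lemma exists_signed_circuit [Fintype V] [Fintype E] {x : E → ℤ}
    (hker : ∀ a, G.dvg x a = 0) {e0 : E} (h0 : x e0 ≠ 0) :
    ∃ χ : E → ℤ, G.IsCircuitVector χ ∧
      ∀ e, χ e ≠ 0 → (χ e = 1 ∧ 0 < x e) ∨ (χ e = -1 ∧ x e < 0) := by
  classical
  set sr : E → V := fun e => if 0 < x e then G.s e else G.t e with hsr
  set tg : E → V := fun e => if 0 < x e then G.t e else G.s e with htg
  set D := {e : E // x e ≠ 0}
  have key : ∀ a : V, (∑ e, |x e| * (if tg e = a then (1:ℤ) else 0)) =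
      (∑ e, |x e| * (if sr e = a then (1:ℤ) else 0)) := by
    intro a
    have hpt : ∀ e, x e * ((if G.t e = a then 1 else 0) - (if G.s e = a then (1:ℤ) else 0)) =
        |x e| * (if tg e = a then (1:ℤ) else 0) - |x e| * (if sr e = a then (1:ℤ) else 0) := by
      intro e
      rcases lt_trichotomy (x e) 0 with h | h | h
      · have hn : ¬ 0 < x e := by omega
        simp only [hsr, htg, if_neg hn, abs_of_neg h]
        ring
      · simp [h]
      · simp only [hsr, htg, if_pos h, abs_of_pos h]
        ring
    have := hker a
    rw [dvg] at this
    have h2 : ∑ e, (|x e| * (if tg e = a then (1:ℤ) else 0) -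
        |x e| * (if sr e = a then (1:ℤ) else 0)) = 0 := by
      rw [← Finset.sum_congr rfl (fun e _ => hpt e)]
      exact this
    rw [Finset.sum_sub_distrib] at h2
    linarith
  -- the dart structure
  have H : ∀ d : D, ∃ d' : D, sr d'.1 = tg d.1 ∧ (d'.1 ≠ d.1 ∨ sr d.1 = tg d.1) := by
    intro d
    set a := tg d.1
    have h1 : (0:ℤ) < ∑ e, |x e| * (if tg e = a then (1:ℤ) else 0) := by
      apply Finset.sum_pos' (fun e _ => by positivity)
      refine ⟨d.1, Finset.mem_univ _, ?_⟩
      rw [if_pos rfl, mul_one]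
      exact abs_pos.mpr d.2
    rw [key a] at h1
    obtain ⟨e', _, he'⟩ := Finset.exists_ne_zero_of_sum_ne_zero (ne_of_gt h1)
    have hx' : x e' ≠ 0 := by
      intro h; rw [h] at he'; simp at he'
    have hsra : sr e' = a := by
      by_contra h; rw [if_neg h, mul_zero] at he'; exact he' rfl
    by_cases hee : e' = d.1
    · exact ⟨⟨e', hx'⟩, hsra, Or.inr (by rw [← hee]; exact hsra)⟩
    · exact ⟨⟨e', hx'⟩, hsra, Or.inl hee⟩
  obtain ⟨m, vv, dd, hm, hvinj, hedinj, hprop⟩ := walk_lemma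
    (fun d : D => sr d.1) (fun d => tg d.1) (fun d => d.1)
    (fun d d' h => by cases Subtype.ext h; exact Or.inl ⟨rfl, rfl⟩) H ⟨e0, h0⟩
  set ed : Fin m → E := fun i => (dd i).1 with hed
  set χ : E → ℤ := fun e => if e ∈ Set.range ed then (if 0 < x e then 1 else -1) else 0 with hχ
  have hx_ne : ∀ i, x (ed i) ≠ 0 := fun i => (dd i).2
  have hχi : ∀ i, χ (ed i) = if 0 < x (ed i) then 1 else -1 := by
    intro i; rw [hχ]; simp only [if_pos (Set.mem_range_self i)]
  have hsupp : ∀ e, e ∉ Set.range ed → χ e = 0 := by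
    intro e he; rw [hχ]; simp only [if_neg he]
  have hsign : ∀ i, (G.s (ed i) = vv i ∧ G.t (ed i) = vv (cyc i) ∧ χ (ed i) = 1) ∨
      (G.s (ed i) = vv (cyc i) ∧ G.t (ed i) = vv i ∧ χ (ed i) = -1) := by
    intro i
    obtain ⟨hσ, hτ⟩ := hprop i
    have hτ : tg (ed i) = vv (Multigraph.cyc i) := hτ
    by_cases hpos : 0 < x (ed i)
    · left
      refine ⟨?_, ?_, by rw [hχi i, if_pos hpos]⟩
      · rw [← hσ]; simp only [hsr, if_pos hpos]; exact (if_pos hpos).symm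
      · rw [← hτ]; simp only [htg, if_pos hpos]
    · right
      refine ⟨?_, ?_, by rw [hχi i, if_neg hpos]⟩
      · rw [← hτ]; simp only [htg, if_neg hpos]
      · rw [← hσ]; simp only [hsr, if_neg hpos]; exact (if_neg hpos).symm
  have hconn : ∀ i, G.Connects (ed i) (vv i) (vv (cyc i)) := by
    intro i
    rcases hsign i with ⟨h1, h2, _⟩ | ⟨h1, h2, _⟩
    · exact Or.inl ⟨h1, h2⟩
    · exact Or.inr ⟨h1, h2⟩
  refine ⟨χ, ⟨m, vv, ed, ⟨hm, hvinj, hedinj, hconn⟩, hsign, hsupp⟩, ?_⟩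
  intro e he
  by_cases hr : e ∈ Set.range ed
  · obtain ⟨i, rfl⟩ := hr
    by_cases hpos : 0 < x (ed i)
    · exact Or.inl ⟨by rw [hχi i, if_pos hpos], hpos⟩
    · have : x (ed i) < 0 := by have := hx_ne i; omega
      exact Or.inr ⟨by rw [hχi i, if_neg hpos], this⟩
  · exact absurd (hsupp e hr) he

lemma exists_circuit_not_dvd [Fintype V] [Fintype E] {p : ℕ} (hp : p.Prime) {c : E → ℤ}
    (hker : ∀ a, G.dvg c a = 0) {e0 : E} (h0 : ¬ (p:ℤ) ∣ c e0) :
    ∃ (m : ℕ) (v : Fin m → V) (ed : Fin m → E), G.IsCircuit v ed ∧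
      ∀ i, ¬ (p:ℤ) ∣ c (ed i) := by
  classical
  set D := {e : E // ¬ (p:ℤ) ∣ c e} × Bool
  set σ : D → V := fun d => if d.2 then G.t d.1.1 else G.s d.1.1 with hσd
  set τ : D → V := fun d => if d.2 then G.s d.1.1 else G.t d.1.1 with hτd
  set π : D → E := fun d => d.1.1 with hπd
  have Hπ : ∀ d d' : D, π d = π d' →
      (σ d = σ d' ∧ τ d = τ d') ∨ (σ d = τ d' ∧ τ d = σ d') := by
    rintro ⟨⟨e, he⟩, b⟩ ⟨⟨e', he'⟩, b'⟩ h
    have : e = e' := h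
    subst this
    cases b <;> cases b' <;> simp [hσd, hτd] <;> tauto
  have H : ∀ d : D, ∃ d' : D, σ d' = τ d ∧ (π d' ≠ π d ∨ σ d = τ d) := by
    rintro ⟨⟨e, he⟩, b⟩
    by_cases hloop : G.s e = G.t e
    · refine ⟨⟨⟨e, he⟩, b⟩, ?_, Or.inr ?_⟩ <;> cases b <;> simp [hσd, hτd, hloop]
    · set a := τ (⟨e, he⟩, b) with ha
      -- find another edge at a with label coordinate not divisible by p
      have claim : ∃ e', e' ≠ e ∧ ¬ (p:ℤ) ∣ c e' ∧ (G.s e' = a ∨ G.t e' = a) := by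
        by_contra hno
        push_neg at hno
        have hterm : ∀ e' ∈ Finset.univ.erase e, (p:ℤ) ∣
            c e' * ((if G.t e' = a then 1 else 0) - (if G.s e' = a then (1:ℤ) else 0)) := by
          intro e' he'mem
          have hne : e' ≠ e := (Finset.mem_erase.mp he'mem).1
          by_cases hdvd : (p:ℤ) ∣ c e'
          · exact hdvd.mul_right _
          · obtain ⟨h1, h2⟩ : G.s e' ≠ a ∧ G.t e' ≠ a := by
              have := hno e' hne hdvd
              tauto
            rw [if_neg h1, if_neg h2]
            simp
        have hsum : (p:ℤ) ∣ ∑ e' ∈ Finset.univ.erase e,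
            c e' * ((if G.t e' = a then 1 else 0) - (if G.s e' = a then (1:ℤ) else 0)) :=
          Finset.dvd_sum hterm
        have htot := hker a
        rw [dvg, ← Finset.add_sum_erase _ _ (Finset.mem_univ e)] at htot
        have hce : (p:ℤ) ∣ c e * ((if G.t e = a then 1 else 0) - (if G.s e = a then (1:ℤ) else 0)) := by
          have : c e * ((if G.t e = a then 1 else 0) - (if G.s e = a then (1:ℤ) else 0)) =
              - ∑ e' ∈ Finset.univ.erase e,
              c e' * ((if G.t e' = a then 1 else 0) - (if G.s e' = a then (1:ℤ) else 0)) := by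
            linarith
          rw [this]
          exact hsum.neg_right
        -- a is one endpoint of e, and s e ≠ t e
        cases b with
        | false =>
          have haa : a = G.t e := by rw [ha]; simp [hτd]
          rw [if_pos haa.symm, if_neg (fun h => hloop (h.trans haa))] at hce
          simp at hce
          exact he hce
        | true =>
          have haa : a = G.s e := by rw [ha]; simp [hτd]
          rw [if_neg (fun h => hloop ((h.trans haa).symm)), if_pos haa.symm] at hce
          simp at hce
          exact he hce
      obtain ⟨e', hne, hnd, hend⟩ := claim
      by_cases hse : G.s e' = a
      · refine ⟨⟨⟨e', hnd⟩, false⟩, ?_, Or.inl ?_⟩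
        · simpa [hσd] using hse
        · simpa [hπd] using hne
      · have hte : G.t e' = a := by tauto
        refine ⟨⟨⟨e', hnd⟩, true⟩, ?_, Or.inl ?_⟩
        · simpa [hσd] using hte
        · simpa [hπd] using hne
  obtain ⟨m, vv, dd, hm, hvinj, hedinj, hprop⟩ := walk_lemma σ τ π Hπ H ⟨⟨e0, h0⟩, false⟩
  set ed : Fin m → E := fun i => π (dd i) with hed
  refine ⟨m, vv, ed, ⟨hm, hvinj, hedinj, ?_⟩, fun i => (dd i).1.2⟩
  intro i
  obtain ⟨h1, h2⟩ := hprop i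
  have h2' : τ (dd i) = vv (Multigraph.cyc i) := h2
  rcases Bool.eq_false_or_eq_true (dd i).2 with hb | hb
  · right
    constructor
    · rw [← h2']; simp [hτd, hed, hπd, hb]
    · rw [← h1]; simp [hσd, hed, hπd, hb]
  · left
    constructor
    · rw [← h1]; simp [hσd, hed, hπd, hb]
    · rw [← h2']; simp [hτd, hed, hπd, hb]




lemma key_induction [Fintype V] [Fintype E] (l : E → ℕ) (HC : G.CircuitCoprime l)
    {p : ℕ} (hp : p.Prime) :
    ∀ (n : ℕ) (c : E → ℤ), c ∈ Submodule.span ℤ {x | G.IsCircuitVector x} →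
      (∑ e, (c e).natAbs) ≤ n → (∀ e, (p:ℤ) ∣ (l e : ℤ) * c e) →
      ∃ c' ∈ Submodule.span ℤ {x | G.IsCircuitVector x}, c = (p:ℤ) • c' := by
  have hpZ : Prime (p : ℤ) := Nat.prime_iff_prime_int.mp hp
  intro n
  induction n with
  | zero =>
    intro c hc hn _
    have hzero : ∀ e, c e = 0 := by
      intro e
      have h1 : (c e).natAbs = 0 := by
        have := Finset.sum_eq_zero_iff.mp (Nat.le_zero.mp hn) e (Finset.mem_univ e)
        exact this
      omega
    exact ⟨0, Submodule.zero_mem _, by funext e; simp [hzero e]⟩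
  | succ n ih =>
    intro c hc hn hdvd
    by_cases hz : ∀ e, c e = 0
    · exact ⟨0, Submodule.zero_mem _, by funext e; simp [hz e]⟩
    push_neg at hz
    obtain ⟨e0, he0⟩ := hz
    have hker : ∀ a, G.dvg c a = 0 := G.dvg_of_mem_span hc
    by_cases hdall : ∀ e, (p:ℤ) ∣ c e
    · -- subtract a sign-aligned circuit
      obtain ⟨χ, hχ, halign⟩ := G.exists_signed_circuit hker he0
      have hχmem : χ ∈ Submodule.span ℤ {x | G.IsCircuitVector x} :=
        Submodule.subset_span hχ
      set c₂ : E → ℤ := c - (p:ℤ) • χ with hc₂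
      have hc₂mem : c₂ ∈ Submodule.span ℤ {x | G.IsCircuitVector x} :=
        Submodule.sub_mem _ hc (Submodule.smul_mem _ _ hχmem)
      have hdvd₂ : ∀ e, (p:ℤ) ∣ (l e : ℤ) * c₂ e := by
        intro e
        have : (l e : ℤ) * c₂ e = (l e : ℤ) * c e - (p:ℤ) * ((l e : ℤ) * χ e) := by
          rw [hc₂]; simp [Pi.sub_apply, Pi.smul_apply]; ring
        rw [this]
        exact dvd_sub (hdvd e) (Dvd.intro _ rfl)
      have hle : ∀ e, (c₂ e).natAbs ≤ (c e).natAbs := by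
        intro e
        by_cases hne : χ e = 0
        · simp [hc₂, Pi.sub_apply, Pi.smul_apply, hne]
        · rcases halign e hne with ⟨h1, h2⟩ | ⟨h1, h2⟩
          · have hple : (p:ℤ) ≤ c e := Int.le_of_dvd h2 (hdall e)
            have : c₂ e = c e - (p:ℤ) := by
              rw [hc₂]; simp [Pi.sub_apply, Pi.smul_apply, h1]
            rw [this]; omega
          · have hple : c e ≤ -(p:ℤ) := by
              have := Int.le_of_dvd (by omega : (0:ℤ) < -(c e)) ((hdall e).neg_right)
              omega
            have : c₂ e = c e + (p:ℤ) := by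
              rw [hc₂]; simp only [Pi.sub_apply, Pi.smul_apply, smul_eq_mul, h1]; ring
            rw [this]; omega
      have hstrictE : ∃ e, (c₂ e).natAbs < (c e).natAbs := by
        obtain ⟨m, vv, ed, ⟨hm, _, _, _⟩, hsign, _⟩ := hχ
        set e := ed ⟨0, hm⟩
        have hχe : χ e ≠ 0 := by
          rcases hsign ⟨0, hm⟩ with ⟨_, _, h3⟩ | ⟨_, _, h3⟩ <;> rw [h3] <;> simp
        refine ⟨e, ?_⟩
        rcases halign e hχe with ⟨h1, h2⟩ | ⟨h1, h2⟩
        · have hple : (p:ℤ) ≤ c e := Int.le_of_dvd h2 (hdall e)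
          have hpp : 0 < p := hp.pos
          have : c₂ e = c e - (p:ℤ) := by
            rw [hc₂]; simp [Pi.sub_apply, Pi.smul_apply, h1]
          rw [this]; omega
        · have hple : c e ≤ -(p:ℤ) := by
            have := Int.le_of_dvd (by omega : (0:ℤ) < -(c e)) ((hdall e).neg_right)
            omega
          have hpp : 0 < p := hp.pos
          have : c₂ e = c e + (p:ℤ) := by
            rw [hc₂]; simp only [Pi.sub_apply, Pi.smul_apply, smul_eq_mul, h1]; ring
          rw [this]; omega
      have hsum : (∑ e, (c₂ e).natAbs) < ∑ e, (c e).natAbs := by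
        obtain ⟨e, he⟩ := hstrictE
        exact Finset.sum_lt_sum (fun e _ => hle e) ⟨e, Finset.mem_univ e, he⟩
      obtain ⟨c', hc'mem, hc'⟩ := ih c₂ hc₂mem (by omega) hdvd₂
      refine ⟨c' + χ, Submodule.add_mem _ hc'mem hχmem, ?_⟩
      funext e
      have h1 : c₂ e = (p:ℤ) * c' e := by rw [hc']; simp [Pi.smul_apply]
      have h2 : c₂ e = c e - (p:ℤ) * χ e := by rw [hc₂]; simp [Pi.sub_apply, Pi.smul_apply]
      simp only [Pi.smul_apply, Pi.add_apply, smul_eq_mul]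
      linarith
    · -- some coordinate not divisible: contradiction with coprimality
      exfalso
      push_neg at hdall
      obtain ⟨e1, he1⟩ := hdall
      obtain ⟨m, vv, ed, hcirc, hnd⟩ := G.exists_circuit_not_dvd hp hker he1
      have hgcd := HC m vv ed hcirc
      have hdvdgcd : (p:ℕ) ∣ Finset.univ.gcd (fun i : Fin m => l (ed i)) := by
        refine Finset.dvd_gcd fun i _ => ?_
        have := hdvd (ed i)
        rcases hpZ.dvd_mul.mp this with h | h
        · exact_mod_cast Int.natCast_dvd_natCast.mp h
        · exact absurd h (hnd i)
      rw [hgcd] at hdvdgcd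
      exact hp.one_lt.ne' (Nat.dvd_one.mp hdvdgcd)




/-- Componentwise multiplication by the labels, as a linear map. -/
def mulL (l : E → ℕ) : (E → ℤ) →ₗ[ℤ] (E → ℤ) where
  toFun x := fun e => x e * (l e : ℤ)
  map_add' x y := by funext e; simp [add_mul]
  map_smul' r x := by funext e; simp [Pi.smul_apply, smul_eq_mul]; ring

lemma mulL_apply (l : E → ℕ) (x : E → ℤ) (e : E) : mulL l x e = x e * (l e : ℤ) := rfl

lemma span_labelled_eq (l : E → ℕ) :
    Submodule.span ℤ {y : E → ℤ | ∃ x : E → ℤ, G.IsCircuitVector x ∧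
        y = fun e => x e * (l e : ℤ)} =
      Submodule.map (mulL l) (Submodule.span ℤ {x | G.IsCircuitVector x}) := by
  rw [Submodule.map_span]
  congr 1
  ext y
  constructor
  · rintro ⟨x, h1, h2⟩
    exact ⟨x, h1, h2.symm⟩
  · rintro ⟨x, h1, h2⟩
    exact ⟨x, h1, h2.symm⟩

lemma prime_sat [Fintype V] [Fintype E] (l : E → ℕ) (HC : G.CircuitCoprime l)
    {p : ℕ} (hp : p.Prime) {z : E → ℤ}
    (h : (p:ℤ) • z ∈ Submodule.map (mulL l) (Submodule.span ℤ {x | G.IsCircuitVector x})) :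
    z ∈ Submodule.map (mulL l) (Submodule.span ℤ {x | G.IsCircuitVector x}) := by
  obtain ⟨c, hcC, hc⟩ := h
  have hdvd : ∀ e, (p:ℤ) ∣ (l e : ℤ) * c e := by
    intro e
    have h1 : c e * (l e : ℤ) = (p:ℤ) * z e := by
      have := congrFun hc e
      rw [mulL_apply] at this
      simpa [Pi.smul_apply, smul_eq_mul] using this
    exact ⟨z e, by linear_combination h1⟩
  obtain ⟨c', hc'C, hcc⟩ := G.key_induction l HC hp (∑ e, (c e).natAbs) c hcC le_rfl hdvd
  refine ⟨c', hc'C, ?_⟩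
  funext e
  have h1 : c e * (l e : ℤ) = (p:ℤ) * z e := by
    have := congrFun hc e
    rw [mulL_apply] at this
    simpa [Pi.smul_apply, smul_eq_mul] using this
  have h2 : c e = (p:ℤ) * c' e := by rw [hcc]; simp [Pi.smul_apply]
  rw [mulL_apply]
  have hp0 : (p:ℤ) ≠ 0 := by exact_mod_cast hp.pos.ne'
  apply Int.eq_of_mul_eq_mul_left hp0
  rw [← h1, h2]; ring

lemma sat [Fintype V] [Fintype E] (l : E → ℕ) (HC : G.CircuitCoprime l) :
    ∀ (n : ℕ) (a : ℤ), a.natAbs = n → a ≠ 0 → ∀ z : E → ℤ,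
      a • z ∈ Submodule.map (mulL l) (Submodule.span ℤ {x | G.IsCircuitVector x}) →
      z ∈ Submodule.map (mulL l) (Submodule.span ℤ {x | G.IsCircuitVector x}) := by
  intro n
  induction n using Nat.strong_induction_on with
  | _ n ih =>
    intro a han ha0 z hz
    by_cases hn1 : n = 1
    · -- a = ±1
      have : a = 1 ∨ a = -1 := by
        rcases Int.natAbs_eq a with h | h <;> rw [han, hn1] at h <;> omega
      rcases this with rfl | rfl
      · simpa using hz
      · have := Submodule.smul_mem _ (-1 : ℤ) hz
        rw [smul_smul] at this
        simpa using this
    · have hn0 : n ≠ 0 := by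
        intro h; rw [h] at han; exact ha0 (Int.natAbs_eq_zero.mp han)
      set q := n.minFac with hq
      have hqp : q.Prime := Nat.minFac_prime hn1
      have hqdvd : q ∣ n := Nat.minFac_dvd n
      have hqa : (q:ℤ) ∣ a := by
        have h1 : (q:ℤ) ∣ (a.natAbs : ℤ) :=
          Int.natCast_dvd_natCast.mpr (by rw [han]; exact hqdvd)
        exact dvd_trans h1 (Int.natAbs_dvd.mpr dvd_rfl)
      obtain ⟨b, hb⟩ := hqa
      have hb0 : b ≠ 0 := by
        intro h; rw [h, mul_zero] at hb; exact ha0 hb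
      have hbz : (q:ℤ) • (b • z) ∈
          Submodule.map (mulL l) (Submodule.span ℤ {x | G.IsCircuitVector x}) := by
        rw [smul_smul, ← hb]; exact hz
      have hbzz := G.prime_sat l HC hqp hbz
      have hblt : b.natAbs < n := by
        have h1 : a.natAbs = q * b.natAbs := by rw [hb, Int.natAbs_mul, Int.natAbs_natCast]
        have h2 : 2 ≤ q := hqp.two_le
        have h3 : b.natAbs ≠ 0 := fun h => hb0 (Int.natAbs_eq_zero.mp h)
        rw [han] at h1
        have h5 := Nat.mul_le_mul_right b.natAbs h2
        omega
      exact ih b.natAbs hblt b rfl hb0 z hbzz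


end Multigraph


/-- Let `(G,l)` be a finite connected graph with edge labels in
`ℤ_{≥1}`.  The Smith normal form of the labelled circuit matrix `M_{(G,l)}` (whose rows
are the labelled circuit vectors) has all of its (`r` many) nonzero diagonal entries
equal to `1` if and only if `(G,l)` is circuit-coprime.  Invariantly: the quotient of
`ℤ^E` by the row space of `M_{(G,l)}` is torsion-free iff `(G,l)` is circuit-coprime. -/
theorem statement7 {V E : Type*} [Fintype V] [Fintype E]
    (G : Multigraph V E) (hG : G.Connected)
    (l : E → ℕ) (hl : ∀ e, 1 ≤ l e) :
    Submodule.torsion ℤ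
        ((E → ℤ) ⧸ Submodule.span ℤ
          {y : E → ℤ | ∃ x : E → ℤ, G.IsCircuitVector x ∧ y = fun e => x e * (l e : ℤ)}) = ⊥
      ↔ G.CircuitCoprime l := by
  classical
  set L := Submodule.span ℤ
      {y : E → ℤ | ∃ x : E → ℤ, G.IsCircuitVector x ∧ y = fun e => x e * (l e : ℤ)} with hL
  constructor
  · intro htf m v ed hcirc
    by_contra hg
    set g := Finset.univ.gcd (fun i : Fin m => l (ed i)) with hgdef
    have hm : 0 < m := hcirc.1
    set i0 : Fin m := ⟨0, hm⟩ with hi0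
    have hdvd0 : g ∣ l (ed i0) := Finset.gcd_dvd (Finset.mem_univ i0)
    have hl0 : 1 ≤ l (ed i0) := hl _
    have hgpos : 1 ≤ g := by
      rcases Nat.eq_zero_or_pos g with h | h
      · rw [h] at hdvd0; omega
      · exact h
    have hg2 : 2 ≤ g := by omega
    obtain ⟨x, hxICV, hx1, hxsupp⟩ := G.exists_circuitVector hcirc
    set z : E → ℤ := fun e => x e * ((l e / g : ℕ) : ℤ) with hz
    have hdvdr : ∀ e, e ∈ Set.range ed → g ∣ l e := by
      rintro e ⟨i, rfl⟩
      exact Finset.gcd_dvd (Finset.mem_univ i)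
    have hgz : (g:ℤ) • z = fun e => x e * (l e : ℤ) := by
      funext e
      by_cases hx0 : x e = 0
      · simp [hz, Pi.smul_apply, hx0]
      · have her : e ∈ Set.range ed := by
          by_contra h; exact hx0 (hxsupp e h)
        have hdl := hdvdr e her
        have : ((l e / g : ℕ) : ℤ) * (g : ℤ) = (l e : ℤ) := by
          rw [← Nat.cast_mul, Nat.div_mul_cancel hdl]
        simp only [hz, Pi.smul_apply, smul_eq_mul]
        rw [← this]; ring
    have hgzL : (g:ℤ) • z ∈ L := by
      rw [hgz]
      exact Submodule.subset_span ⟨x, hxICV, rfl⟩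
    have hg0 : ((g:ℤ)) ≠ 0 := by exact_mod_cast (by omega : g ≠ 0)
    have htor : (Submodule.Quotient.mk z : (E → ℤ) ⧸ L) ∈
        Submodule.torsion ℤ ((E → ℤ) ⧸ L) := by
      rw [Submodule.mem_torsion_iff]
      refine ⟨⟨(g:ℤ), mem_nonZeroDivisors_of_ne_zero hg0⟩, ?_⟩
      show (g:ℤ) • (Submodule.Quotient.mk z : (E → ℤ) ⧸ L) = 0
      rw [← Submodule.Quotient.mk_smul]
      exact (Submodule.Quotient.mk_eq_zero L).mpr hgzL
    rw [htf, Submodule.mem_bot] at htor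
    have hzL : z ∈ L := (Submodule.Quotient.mk_eq_zero L).mp htor
    have hrange : L ≤ LinearMap.range (Multigraph.mulL (E := E) l) := by
      rw [hL]
      refine Submodule.span_le.mpr ?_
      rintro y ⟨x', _, rfl⟩
      exact ⟨x', rfl⟩
    obtain ⟨c, hc⟩ := hrange hzL
    -- contradiction at edge ed i0
    set e0 := ed i0 with he0
    have h1 : c e0 * (l e0 : ℤ) = z e0 := congrFun hc e0
    have hx0 : x e0 = 1 ∨ x e0 = -1 := hx1 i0
    have hdivpos : 1 ≤ l e0 / g := (Nat.one_le_div_iff (by omega)).mpr (Nat.le_of_dvd (by omega) hdvd0)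
    have hdivlt : l e0 / g < l e0 := Nat.div_lt_self (by omega) (by omega)
    have hznat : (z e0).natAbs = l e0 / g := by
      have hze : z e0 = x e0 * ((l e0 / g : ℕ) : ℤ) := rfl
      rcases hx0 with h | h <;> rw [hze, h] <;>
        simp only [one_mul, neg_mul, Int.natAbs_neg, Int.natAbs_natCast]
    have hcnat : (z e0).natAbs = (c e0).natAbs * l e0 := by
      rw [← h1, Int.natAbs_mul, Int.natAbs_natCast]
    have hc0 : (c e0).natAbs ≠ 0 := by
      intro h; rw [h, zero_mul] at hcnat; omega
    have : l e0 ≤ (c e0).natAbs * l e0 := Nat.le_mul_of_pos_left _ (by omega)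
    omega
  · intro HC
    rw [Submodule.eq_bot_iff]
    intro q hq
    obtain ⟨z, rfl⟩ := Submodule.Quotient.mk_surjective L q
    rw [Submodule.mem_torsion_iff] at hq
    obtain ⟨⟨a, haND⟩, ha⟩ := hq
    have ha0 : a ≠ 0 := nonZeroDivisors.ne_zero haND
    have hazL : a • z ∈ L := by
      rw [← Submodule.Quotient.mk_eq_zero L, Submodule.Quotient.mk_smul]
      exact ha
    have hmap : L = Submodule.map (Multigraph.mulL l)
        (Submodule.span ℤ {x | G.IsCircuitVector x}) := G.span_labelled_eq l
    rw [hmap] at hazL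
    have hzl := G.sat l HC a.natAbs a rfl ha0 z hazL
    rw [← hmap] at hzl
    exact (Submodule.Quotient.mk_eq_zero L).mpr hzl
end

section
/- Let A = R̂[[x,y]]/(xy − t^N) where R̂ is a complete discrete valuation ring with uniformizer t and N ∈ ℤ_{≥1}, and let Y_w ⊂ Spec A be the Weil divisor defined by the ideal (x,t). Then for M ∈ ℤ, the Weil divisor M·Y_w is Cartier (i.e., its ideal sheaf is locally principal) if and only if N divides M; moreover div(x) = N·Y_w. -/
universe u

namespace Stmt17Aux

open MvPowerSeries Finsupp

variable {R : Type u} [CommRing R]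

/-- The ring hom `R⟦x₀,x₁⟧ → R⟦X⟧` keeping the variable `i` and killing the other one. -/
noncomputable def toPS (i : Fin 2) : MvPowerSeries (Fin 2) R →+* PowerSeries R where
  toFun f := PowerSeries.mk fun n => MvPowerSeries.coeff (Finsupp.single i n) f
  map_one' := by
    ext n
    simp [MvPowerSeries.coeff_one, PowerSeries.coeff_one, Finsupp.single_eq_zero]
  map_mul' f g := by
    ext n
    classical
    simp only [PowerSeries.coeff_mk, PowerSeries.coeff_mul, MvPowerSeries.coeff_mul,
      Finsupp.antidiagonal_single, Finset.sum_map, Function.Embedding.coe_prodMap,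
      Function.Embedding.coeFn_mk, Prod.map_apply]
    rfl
  map_zero' := by
    ext n
    simp
  map_add' f g := by
    ext n
    simp

theorem toPS_coeff (i : Fin 2) (f : MvPowerSeries (Fin 2) R) (n : ℕ) :
    PowerSeries.coeff (R := R) n (toPS i f) = MvPowerSeries.coeff (Finsupp.single i n) f := by
  show PowerSeries.coeff (R := R) n
    (PowerSeries.mk fun n => MvPowerSeries.coeff (Finsupp.single i n) f) = _
  exact PowerSeries.coeff_mk _ _

theorem toPS_C (i : Fin 2) (a : R) :
    toPS i (MvPowerSeries.C (σ := Fin 2) (R := R) a) = PowerSeries.C (R := R) a := by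
  ext n
  classical
  rw [toPS_coeff, MvPowerSeries.coeff_C, PowerSeries.coeff_C]
  simp [Finsupp.single_eq_zero]

theorem toPS_X_same (i : Fin 2) : toPS i (MvPowerSeries.X i) = (PowerSeries.X : PowerSeries R) := by
  ext n
  classical
  rw [toPS_coeff, MvPowerSeries.coeff_X, PowerSeries.coeff_X]
  by_cases h : n = 1
  · simp [h]
  · rw [if_neg, if_neg h]
    intro hc
    exact h (by simpa using DFunLike.congr_fun hc i)

theorem toPS_X_ne {i j : Fin 2} (h : j ≠ i) : toPS i (MvPowerSeries.X j) = (0 : PowerSeries R) := by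
  ext n
  classical
  rw [toPS_coeff, MvPowerSeries.coeff_X]
  rw [if_neg, map_zero]
  intro hc
  have := DFunLike.congr_fun hc j
  simp [Finsupp.single_apply, h.symm, (h.symm : ¬ i = j)] at this


/-- Coefficientwise division in `MvPowerSeries`. -/
theorem exists_C_mul_of_dvd {p : R} {F : MvPowerSeries (Fin 2) R}
    (h : ∀ m, p ∣ MvPowerSeries.coeff m F) :
    ∃ G, F = MvPowerSeries.C (σ := Fin 2) (R := R) p * G := by
  refine ⟨fun m => (h m).choose, ?_⟩
  ext m
  exact (h m).choose_spec.trans (MvPowerSeries.coeff_C_mul m (fun m => (h m).choose) p).symm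

/-- Coefficientwise division in `PowerSeries`. -/
theorem ps_exists_C_mul_of_dvd {p : R} {F : PowerSeries R}
    (h : ∀ n, p ∣ PowerSeries.coeff (R := R) n F) :
    ∃ G, F = PowerSeries.C (R := R) p * G := by
  refine ⟨PowerSeries.mk fun n => (h n).choose, ?_⟩
  ext n
  rw [PowerSeries.coeff_C_mul, PowerSeries.coeff_mk]
  exact (h n).choose_spec

/-- If all coefficients of pure-`x₁` monomials of `F` are divisible by `p`,
then `F ∈ (x₀, p)`. -/
theorem mem_span_X_C {p : R} {F : MvPowerSeries (Fin 2) R}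
    (h : ∀ n, p ∣ MvPowerSeries.coeff (Finsupp.single 1 n) F) :
    F ∈ Ideal.span {MvPowerSeries.X (0 : Fin 2), MvPowerSeries.C (σ := Fin 2) (R := R) p} := by
  classical
  set G : MvPowerSeries (Fin 2) R := fun m => MvPowerSeries.coeff (m + Finsupp.single 0 1) F
    with hG
  have hXG : ∀ m, MvPowerSeries.coeff m (MvPowerSeries.X (0 : Fin 2) * G) =
      if Finsupp.single (0 : Fin 2) 1 ≤ m then MvPowerSeries.coeff m F else 0 := by
    intro m
    rw [MvPowerSeries.X_def, MvPowerSeries.coeff_monomial_mul]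
    split_ifs with hle
    · rw [one_mul]
      show MvPowerSeries.coeff (m - Finsupp.single 0 1 + Finsupp.single 0 1) F = _
      rw [tsub_add_cancel_of_le hle]
    · rfl
  have key : ∀ m, p ∣ MvPowerSeries.coeff m (F - MvPowerSeries.X (0 : Fin 2) * G) := by
    intro m
    rw [map_sub, hXG]
    split_ifs with hle
    · simp
    · rw [sub_zero]
      have hm0 : m 0 = 0 := by
        by_contra hm
        exact hle (by simpa [Finsupp.single_le_iff] using Nat.one_le_iff_ne_zero.mpr hm)
      have : m = Finsupp.single (1 : Fin 2) (m 1) := by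
        ext j
        fin_cases j
        · simpa [Finsupp.single_apply] using hm0
        · simp [Finsupp.single_apply]
      rw [this]
      exact h _
  obtain ⟨H, hH⟩ := exists_C_mul_of_dvd key
  have : F = G * MvPowerSeries.X (0 : Fin 2) +
      H * MvPowerSeries.C (σ := Fin 2) (R := R) p := by
    rw [mul_comm G, mul_comm H, ← hH]
    ring
  rw [Ideal.mem_span_pair]
  exact ⟨G, H, this.symm⟩


section DVR

set_option linter.unusedSectionVars false

variable [IsDomain R] [IsDiscreteValuationRing R] {t : R}

theorem t_prime (ht : Irreducible t) : Prime t :=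
  (Ideal.span_singleton_prime ht.ne_zero).mp
    (PrincipalIdealRing.isMaximal_of_irreducible ht).isPrime

theorem isUnit_of_not_dvd (ht : Irreducible t) {a : R} (h : ¬ t ∣ a) : IsUnit a := by
  by_contra hu
  exact h (Ideal.mem_span_singleton.mp (by
    rw [← (IsDiscreteValuationRing.irreducible_iff_uniformizer t).mp ht]
    exact hu))

theorem map_eq_zero_iff_dvd (F : PowerSeries R) :
    PowerSeries.map (Ideal.Quotient.mk (Ideal.span {t})) F = 0 ↔ ∀ n, t ∣ PowerSeries.coeff (R := R) n F := by
  constructor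
  · intro h n
    have := congrArg (PowerSeries.coeff n) h
    rw [PowerSeries.coeff_map, map_zero, Ideal.Quotient.eq_zero_iff_mem,
      Ideal.mem_span_singleton] at this
    exact this
  · intro h
    ext n
    rw [PowerSeries.coeff_map, map_zero, Ideal.Quotient.eq_zero_iff_mem,
      Ideal.mem_span_singleton]
    exact h n

theorem kappa_t : (Ideal.Quotient.mk (Ideal.span {t})) t = 0 := by
  rw [Ideal.Quotient.eq_zero_iff_mem]
  exact Ideal.subset_span rfl

theorem pow_divides (ht : Irreducible t) (c : ℕ) (F G E : PowerSeries R)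
    (hF : PowerSeries.map (Ideal.Quotient.mk (Ideal.span {t})) F ≠ 0)
    (h : F * G = (PowerSeries.C (R := R) t) ^ c * E) :
    ∃ G', G = (PowerSeries.C (R := R) t) ^ c * G' := by
  haveI : (Ideal.span {t}).IsPrime := (PrincipalIdealRing.isMaximal_of_irreducible ht).isPrime
  induction c generalizing G E with
  | zero => exact ⟨G, by rw [pow_zero, one_mul]⟩
  | succ c IH =>
    have hmap : PowerSeries.map (Ideal.Quotient.mk (Ideal.span {t})) G = 0 := by
      have := congrArg (PowerSeries.map (Ideal.Quotient.mk (Ideal.span {t}))) h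
      simp only [map_mul, map_pow, PowerSeries.map_C, kappa_t, map_zero,
        zero_pow (Nat.succ_ne_zero c), zero_mul] at this
      rcases mul_eq_zero.mp this with h' | h'
      · exact absurd h' hF
      · exact h'
    obtain ⟨G₁, rfl⟩ := ps_exists_C_mul_of_dvd ((map_eq_zero_iff_dvd _).mp hmap)
    have hc : PowerSeries.C (R := R) t * (F * G₁) = PowerSeries.C (R := R) t * ((PowerSeries.C (R := R) t) ^ c * E) := by
      rw [pow_succ] at h; linear_combination h
    have hC0 : (PowerSeries.C (R := R) t) ≠ 0 := fun hh => ht.ne_zero (by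
      simpa using congrArg (PowerSeries.coeff (R := R) 0) hh)
    have := mul_left_cancel₀ hC0 hc
    obtain ⟨G', hG'⟩ := IH G₁ E this
    exact ⟨G', by rw [hG', pow_succ]; ring⟩

theorem core_lemma (ht : Irreducible t) (r : ℕ) :
    ∀ (c : ℕ) (H V E v : PowerSeries R), IsUnit v → r < c →
    (PowerSeries.X + PowerSeries.C (R := R) t * H) * V
      = (PowerSeries.C (R := R) t) ^ r * v + (PowerSeries.C (R := R) t) ^ c * E → False := by
  haveI : (Ideal.span {t}).IsPrime := (PrincipalIdealRing.isMaximal_of_irreducible ht).isPrime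
  induction r with
  | zero =>
    intro c H V E v hv hrc h
    have := congrArg (PowerSeries.map (Ideal.Quotient.mk (Ideal.span {t}))) h
    simp only [map_mul, map_add, map_pow, PowerSeries.map_C, kappa_t, PowerSeries.map_X,
      map_zero, zero_mul, add_zero, pow_zero, one_mul, zero_pow (by omega : c ≠ 0)] at this
    have h0 := congrArg (PowerSeries.constantCoeff (R := _)) this
    rw [map_mul, PowerSeries.constantCoeff_X, zero_mul] at h0
    exact not_isUnit_zero (h0 ▸ ((hv.map (PowerSeries.map (Ideal.Quotient.mk (Ideal.span {t})))).map (PowerSeries.constantCoeff (R := _))))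
  | succ r IH =>
    intro c H V E v hv hrc h
    obtain ⟨c, rfl⟩ : ∃ c', c = c' + 1 := ⟨c - 1, by omega⟩
    have hmap : PowerSeries.map (Ideal.Quotient.mk (Ideal.span {t})) V = 0 := by
      have := congrArg (PowerSeries.map (Ideal.Quotient.mk (Ideal.span {t}))) h
      simp only [map_mul, map_add, map_pow, PowerSeries.map_C, kappa_t, PowerSeries.map_X,
        map_zero, zero_mul, add_zero, zero_pow (Nat.succ_ne_zero r),
        zero_pow (Nat.succ_ne_zero c)] at this
      exact (mul_eq_zero.mp this).resolve_left PowerSeries.X_ne_zero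
    obtain ⟨V₁, rfl⟩ := ps_exists_C_mul_of_dvd ((map_eq_zero_iff_dvd _).mp hmap)
    have hc : PowerSeries.C (R := R) t * ((PowerSeries.X + PowerSeries.C (R := R) t * H) * V₁)
        = PowerSeries.C (R := R) t * ((PowerSeries.C (R := R) t) ^ r * v + (PowerSeries.C (R := R) t) ^ c * E) := by
      rw [pow_succ, pow_succ] at h; linear_combination h
    have hC0 : (PowerSeries.C (R := R) t) ≠ 0 := fun hh => ht.ne_zero (by
      simpa using congrArg (PowerSeries.coeff (R := R) 0) hh)
    exact IH c H V₁ E v hv (by omega) (mul_left_cancel₀ hC0 hc)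

end DVR

end Stmt17Aux

namespace Statement17

/-- The completed local ring `A = R̂⟦x,y⟧/(xy - t^N)` of a nodal curve at a split node of
thickness `N` (here `R` is a complete discrete valuation ring with uniformizer `t`). -/
abbrev A (R : Type u) [CommRing R] (t : R) (N : ℕ) : Type u :=
  MvPowerSeries (Fin 2) R ⧸ Ideal.span
    {MvPowerSeries.X (0 : Fin 2) * MvPowerSeries.X (1 : Fin 2) -
      MvPowerSeries.C (σ := Fin 2) (R := R) (t ^ N)}

/-- The element `x ∈ A`. -/
noncomputable def xel (R : Type u) [CommRing R] (t : R) (N : ℕ) : A R t N :=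
  Ideal.Quotient.mk _ (MvPowerSeries.X (0 : Fin 2))

/-- The height-one prime `P = (x, t)` of `A`, corresponding to the Weil divisor
`Y_w ⊂ Spec A` (one of the two branches of the special fibre). -/
noncomputable def P (R : Type u) [CommRing R] (t : R) (N : ℕ) : Ideal (A R t N) :=
  Ideal.span {xel R t N, Ideal.Quotient.mk _ (MvPowerSeries.C (σ := Fin 2) (R := R) t)}

/-- The divisorial ideal of the Weil divisor `M·Y_w`, i.e. the `M`-th symbolic power
`P^{(M)} = (P^M A_P) ∩ A` of `P`. -/
noncomputable def symb (R : Type u) [CommRing R] (t : R) (N : ℕ)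
    (hP : (P R t N).IsPrime) (M : ℕ) : Ideal (A R t N) :=
  Ideal.comap
    (algebraMap (A R t N) (Localization (@Ideal.primeCompl _ _ (P R t N) hP)))
    ((Ideal.map
      (algebraMap (A R t N) (Localization (@Ideal.primeCompl _ _ (P R t N) hP)))
      (P R t N)) ^ M)

end Statement17

namespace Stmt17Aux2

open Stmt17Aux Statement17 MvPowerSeries

variable {R : Type u} [CommRing R] [IsDomain R] [IsDiscreteValuationRing R]
  (t : R) (N : ℕ)

set_option linter.unusedSectionVars false

/-- The relation defining `A`. -/
noncomputable abbrev REL : MvPowerSeries (Fin 2) R :=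
  MvPowerSeries.X (0 : Fin 2) * MvPowerSeries.X (1 : Fin 2) -
    MvPowerSeries.C (σ := Fin 2) (R := R) (t ^ N)

noncomputable abbrev qmk : MvPowerSeries (Fin 2) R →+* A R t N :=
  Ideal.Quotient.mk (Ideal.span {REL t N})

/-- The element `y ∈ A`. -/
noncomputable def yel : A R t N := qmk t N (MvPowerSeries.X (1 : Fin 2))

/-- The element `t ∈ A`. -/
noncomputable def tb : A R t N := qmk t N (MvPowerSeries.C (σ := Fin 2) (R := R) t)

theorem xel_def : xel R t N = qmk t N (MvPowerSeries.X (0 : Fin 2)) := rfl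

theorem P_def : P R t N = Ideal.span {xel R t N, tb t N} := rfl

theorem xy_eq : xel R t N * yel t N = tb t N ^ N := by
  rw [xel_def, yel, tb, ← map_mul, ← map_pow, ← map_pow, Ideal.Quotient.eq]
  exact Ideal.subset_span rfl

theorem qmk_C_pow (j : ℕ) : qmk t N (MvPowerSeries.C (σ := Fin 2) (R := R) (t ^ j)) = tb t N ^ j := by
  rw [tb, ← map_pow, ← map_pow]

theorem treg (ht : Irreducible t) (hN : 1 ≤ N) (z : A R t N) (h : tb t N * z = 0) :
    z = 0 := by
  obtain ⟨F, rfl⟩ := Ideal.Quotient.mk_surjective z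
  rw [tb, ← map_mul, Ideal.Quotient.eq_zero_iff_mem, Ideal.mem_span_singleton] at h
  obtain ⟨D, hD⟩ := h
  have hdvd : ∀ m, t ∣ MvPowerSeries.coeff m D := by
    intro m
    have key := congrArg (MvPowerSeries.coeff
      (Finsupp.single (0 : Fin 2) 1 + Finsupp.single (1 : Fin 2) 1 + m)) hD
    rw [MvPowerSeries.coeff_C_mul] at key
    have hXX : REL t N * D = MvPowerSeries.monomial
        (Finsupp.single (0 : Fin 2) 1 + Finsupp.single (1 : Fin 2) 1) 1 * D -
        MvPowerSeries.C (σ := Fin 2) (R := R) (t ^ N) * D := by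
      rw [REL, MvPowerSeries.X_def, MvPowerSeries.X_def, monomial_mul_monomial, one_mul,
        sub_mul]
    rw [hXX, map_sub, MvPowerSeries.coeff_add_monomial_mul, one_mul,
      MvPowerSeries.coeff_C_mul] at key
    refine ⟨MvPowerSeries.coeff (Finsupp.single (0 : Fin 2) 1 +
      Finsupp.single (1 : Fin 2) 1 + m) F + t ^ (N - 1) * MvPowerSeries.coeff
      (Finsupp.single (0 : Fin 2) 1 + Finsupp.single (1 : Fin 2) 1 + m) D, ?_⟩
    have hNt : t ^ N = t * t ^ (N - 1) := by
      conv_lhs => rw [show N = 1 + (N - 1) by omega]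
      rw [pow_add, pow_one]
    rw [mul_add, ← mul_assoc, ← hNt]
    linear_combination -key
  obtain ⟨D', rfl⟩ := exists_C_mul_of_dvd hdvd
  have hF : F = REL t N * D' := by
    ext m
    have := congrArg (MvPowerSeries.coeff m) hD
    rw [MvPowerSeries.coeff_C_mul, show REL t N * (MvPowerSeries.C (σ := Fin 2) (R := R) t * D')
      = MvPowerSeries.C (σ := Fin 2) (R := R) t * (REL t N * D') by ring, MvPowerSeries.coeff_C_mul] at this
    exact mul_left_cancel₀ ht.ne_zero this
  rw [Ideal.Quotient.eq_zero_iff_mem, Ideal.mem_span_singleton]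
  exact ⟨D', hF⟩

theorem tpow_reg (ht : Irreducible t) (hN : 1 ≤ N) (j : ℕ) (z : A R t N)
    (h : tb t N ^ j * z = 0) : z = 0 := by
  induction j with
  | zero => simpa using h
  | succ j IH =>
    rw [pow_succ, mul_assoc] at h
    exact IH (treg t N ht hN _ (by rw [← h]; ring))

theorem tpow_cancel (ht : Irreducible t) (hN : 1 ≤ N) (j : ℕ) {z w : A R t N}
    (h : tb t N ^ j * z = tb t N ^ j * w) : z = w := by
  have : tb t N ^ j * (z - w) = 0 := by rw [mul_sub, h, sub_self]
  exact sub_eq_zero.mp (tpow_reg t N ht hN j _ this)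

theorem xpow_cancel (ht : Irreducible t) (hN : 1 ≤ N) (k : ℕ) {z w : A R t N}
    (h : xel R t N ^ k * z = xel R t N ^ k * w) : z = w := by
  have h2 : tb t N ^ (N * k) * z = tb t N ^ (N * k) * w := by
    have := congrArg (fun q => yel t N ^ k * q) h
    calc tb t N ^ (N * k) * z = yel t N ^ k * (xel R t N ^ k * z) := by
          rw [← mul_assoc, ← mul_pow, mul_comm (yel t N), xy_eq, ← pow_mul]
      _ = yel t N ^ k * (xel R t N ^ k * w) := this
      _ = tb t N ^ (N * k) * w := by
          rw [← mul_assoc, ← mul_pow, mul_comm (yel t N), xy_eq, ← pow_mul]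
  exact tpow_cancel t N ht hN _ h2

/-- The reduction `A → k⟦y⟧` killing `x` and `t`. -/
noncomputable def nu0 : MvPowerSeries (Fin 2) R →+* PowerSeries (R ⧸ Ideal.span {t}) :=
  (PowerSeries.map (Ideal.Quotient.mk (Ideal.span {t}))).comp (toPS 1)

theorem nu0_rel (hN : 1 ≤ N) : nu0 t (REL t N) = 0 := by
  have ht0 : (Ideal.Quotient.mk (Ideal.span {t})) (t ^ N) = 0 := by
    rw [Ideal.Quotient.eq_zero_iff_mem, Ideal.mem_span_singleton]
    exact dvd_pow_self t (by omega)
  rw [nu0, RingHom.comp_apply, map_sub, map_mul, toPS_X_same, toPS_X_ne (by decide), toPS_C,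
    map_sub, map_mul, PowerSeries.map_C, ht0]
  simp

/-- The reduction `A → k⟦y⟧`. -/
noncomputable def nu (hN : 1 ≤ N) : A R t N →+* PowerSeries (R ⧸ Ideal.span {t}) :=
  Ideal.Quotient.lift _ (nu0 t) (by
    intro a ha
    rw [Ideal.mem_span_singleton] at ha
    obtain ⟨c, rfl⟩ := ha
    rw [map_mul, nu0_rel t N hN, zero_mul])

theorem nu_qmk (hN : 1 ≤ N) (F : MvPowerSeries (Fin 2) R) :
    nu t N hN (qmk t N F) = nu0 t F :=
  Ideal.Quotient.lift_mk _ _ _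

theorem nu_coeff (hN : 1 ≤ N) (F : MvPowerSeries (Fin 2) R) (n : ℕ) :
    PowerSeries.coeff n (nu t N hN (qmk t N F)) =
      Ideal.Quotient.mk (Ideal.span {t}) (MvPowerSeries.coeff (Finsupp.single 1 n) F) := by
  rw [nu_qmk, nu0, RingHom.comp_apply, PowerSeries.coeff_map, toPS_coeff]

theorem mem_P_of_nu_eq_zero (ht : Irreducible t) (hN : 1 ≤ N) (s : A R t N)
    (h : nu t N hN s = 0) : s ∈ P R t N := by
  obtain ⟨S, rfl⟩ := Ideal.Quotient.mk_surjective s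
  have hc : ∀ n, t ∣ MvPowerSeries.coeff (Finsupp.single 1 n) S := by
    intro n
    have := congrArg (PowerSeries.coeff n) h
    rw [nu_coeff, map_zero, Ideal.Quotient.eq_zero_iff_mem, Ideal.mem_span_singleton] at this
    exact this
  have := mem_span_X_C hc
  rw [Ideal.mem_span_pair] at this
  obtain ⟨a, b, hab⟩ := this
  rw [P_def, Ideal.mem_span_pair]
  have h2 := congrArg (qmk t N) hab
  rw [map_add, map_mul, map_mul] at h2
  exact ⟨qmk t N a, qmk t N b, h2⟩

theorem nu_ne_zero_of_not_mem_P (ht : Irreducible t) (hN : 1 ≤ N) {s : A R t N}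
    (hs : s ∉ P R t N) : nu t N hN s ≠ 0 :=
  fun h => hs (mem_P_of_nu_eq_zero t N ht hN s h)

theorem y_not_mem_P (ht : Irreducible t) (hN : 1 ≤ N) : yel t N ∉ P R t N := by
  haveI : (Ideal.span {t}).IsPrime := (PrincipalIdealRing.isMaximal_of_irreducible ht).isPrime
  intro hy
  rw [P_def, Ideal.mem_span_pair] at hy
  obtain ⟨a, b, hab⟩ := hy
  have := congrArg (nu t N hN) hab
  have hx0 : nu t N hN (xel R t N) = 0 := by
    rw [xel_def, nu_qmk, nu0, RingHom.comp_apply, toPS_X_ne (by decide), map_zero]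
  have ht0 : nu t N hN (tb t N) = 0 := by
    have hmk : (Ideal.Quotient.mk (Ideal.span {t})) t = 0 :=
      Ideal.Quotient.eq_zero_iff_mem.mpr (Ideal.subset_span rfl)
    rw [tb, nu_qmk, nu0, RingHom.comp_apply, toPS_C, PowerSeries.map_C, hmk, map_zero]
  have hyX : nu t N hN (yel t N) = PowerSeries.X := by
    rw [yel, nu_qmk, nu0, RingHom.comp_apply, toPS_X_same, PowerSeries.map_X]
  rw [map_add, map_mul, map_mul, hx0, ht0, mul_zero, mul_zero, add_zero, hyX] at this
  exact PowerSeries.X_ne_zero this.symm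

/-- Key lemma: if `s ∉ P` and `s·a ∈ (t^{Nk})` then `a ∈ (x^k)`. -/
theorem mem_x_pow (ht : Irreducible t) (hN : 1 ≤ N) (k : ℕ) :
    ∀ (a b : A R t N) (s : A R t N), s ∉ P R t N → s * a = tb t N ^ (N * k) * b →
    a ∈ Ideal.span {xel R t N ^ k} := by
  induction k with
  | zero =>
    intro a b s hs h
    simp only [pow_zero, Ideal.span_singleton_one]
    exact Submodule.mem_top
  | succ k IH =>
    intro a b s hs h
    obtain ⟨S, rfl⟩ := Ideal.Quotient.mk_surjective s
    obtain ⟨F, rfl⟩ := Ideal.Quotient.mk_surjective a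
    obtain ⟨B, rfl⟩ := Ideal.Quotient.mk_surjective b
    have h0 := h
    rw [← qmk_C_pow t N (N * (k+1))] at h
    rw [← map_mul, ← map_mul, ← sub_eq_zero, ← map_sub, Ideal.Quotient.eq_zero_iff_mem,
      Ideal.mem_span_singleton] at h
    obtain ⟨D, hD⟩ := h
    -- apply `toPS 1` (kill x)
    have e1 : toPS 1 S * toPS 1 F = (PowerSeries.C (R := R) t) ^ N *
        ((PowerSeries.C (R := R) t) ^ (N * k) * toPS 1 B - toPS 1 D) := by
      have h2 := congrArg (toPS (1 : Fin 2)) hD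
      simp only [map_sub, map_mul, toPS_X_same, toPS_X_ne (show (0 : Fin 2) ≠ 1 by decide),
        toPS_C, map_pow, zero_mul, zero_sub, neg_mul] at h2
      have hsplit : (PowerSeries.C (R := R) t) ^ (N * (k+1)) =
          (PowerSeries.C (R := R) t) ^ N * (PowerSeries.C (R := R) t) ^ (N * k) := by
        rw [← pow_add]
        ring_nf
      rw [hsplit] at h2
      linear_combination h2
    have hSne : PowerSeries.map (Ideal.Quotient.mk (Ideal.span {t})) (toPS 1 S) ≠ 0 := by
      have := nu_ne_zero_of_not_mem_P t N ht hN hs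
      rw [nu_qmk, nu0, RingHom.comp_apply] at this
      exact this
    obtain ⟨G', hG'⟩ := pow_divides ht N (toPS 1 S) (toPS 1 F) _ hSne e1
    have hcoe : ∀ n, t ^ N ∣ MvPowerSeries.coeff (Finsupp.single 1 n) F := by
      intro n
      have h1 : MvPowerSeries.coeff (Finsupp.single 1 n) F =
          PowerSeries.coeff (R := R) n (toPS 1 F) := (toPS_coeff 1 F n).symm
      rw [h1, hG', ← map_pow, PowerSeries.coeff_C_mul]
      exact Dvd.intro _ rfl
    have hmem := mem_span_X_C hcoe
    rw [Ideal.mem_span_pair] at hmem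
    obtain ⟨c₁, c₂, hc⟩ := hmem
    have h2 := congrArg (qmk t N) hc
    rw [map_add, map_mul, map_mul, qmk_C_pow, ← xel_def, ← xy_eq] at h2
    have haeq : qmk t N F = xel R t N * (qmk t N c₁ + yel t N * qmk t N c₂) := by
      rw [← h2]; ring
    set a₁ : A R t N := qmk t N c₁ + yel t N * qmk t N c₂ with ha₁
    have hstep : tb t N ^ N * (qmk t N S * a₁) =
        tb t N ^ N * (tb t N ^ (N * k) * (yel t N * qmk t N B)) := by
      have := congrArg (fun q => yel t N * q) h0
      calc tb t N ^ N * (qmk t N S * a₁)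
          = yel t N * (qmk t N S * qmk t N F) := by rw [haeq, ← xy_eq]; ring
        _ = yel t N * (tb t N ^ (N * (k+1)) * qmk t N B) := this
        _ = tb t N ^ N * (tb t N ^ (N * k) * (yel t N * qmk t N B)) := by
            rw [show N * (k+1) = N + N * k by ring, pow_add]; ring
    have hfin := IH a₁ (yel t N * qmk t N B) (qmk t N S) hs
      (tpow_cancel t N ht hN N hstep)
    rw [Ideal.mem_span_singleton] at hfin
    obtain ⟨c, hc2⟩ := hfin
    rw [Ideal.mem_span_singleton]
    exact ⟨c, by rw [haeq, hc2, pow_succ]; ring⟩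

/-- If `g` divides both `t^r` and `x` in `A`, with `0 < r < N`, then `g` is a unit. -/
theorem gdiv (ht : Irreducible t) (hN : 1 ≤ N) {r : ℕ} (hr : 0 < r) (hrN : r < N)
    {g u w : A R t N} (hu : tb t N ^ r = g * u) (hw : xel R t N = g * w) :
    IsUnit g := by
  haveI : (Ideal.span {t}).IsPrime := (PrincipalIdealRing.isMaximal_of_irreducible ht).isPrime
  obtain ⟨G, rfl⟩ := Ideal.Quotient.mk_surjective g
  obtain ⟨U, rfl⟩ := Ideal.Quotient.mk_surjective u
  obtain ⟨W, rfl⟩ := Ideal.Quotient.mk_surjective w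
  by_cases hdvd : t ∣ MvPowerSeries.coeff 0 G
  swap
  · -- constant coefficient of `G` is a unit, hence `g` is a unit
    refine IsUnit.map (qmk t N) (MvPowerSeries.isUnit_iff_constantCoeff.mpr ?_)
    rw [← MvPowerSeries.coeff_zero_eq_constantCoeff_apply]
    exact isUnit_of_not_dvd ht hdvd
  · exfalso
    -- lift the two relations
    rw [← qmk_C_pow t N r, ← map_mul, Ideal.Quotient.eq, Ideal.mem_span_singleton] at hu
    rw [xel_def, ← map_mul, Ideal.Quotient.eq, Ideal.mem_span_singleton] at hw
    obtain ⟨D₁, hD₁⟩ := hu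
    obtain ⟨D₂, hD₂⟩ := hw
    -- apply `toPS 0` (kill y)
    have e1 : toPS 0 G * toPS 0 U = (PowerSeries.C (R := R) t) ^ r +
        (PowerSeries.C (R := R) t) ^ N * toPS 0 D₁ := by
      have h2 := congrArg (toPS (0 : Fin 2)) hD₁
      simp only [map_sub, map_mul, toPS_X_same, toPS_X_ne (show (1 : Fin 2) ≠ 0 by decide),
        toPS_C, map_pow, mul_zero, zero_sub, neg_mul, zero_mul] at h2
      linear_combination -h2
    have e2 : toPS 0 G * toPS 0 W = PowerSeries.X +
        (PowerSeries.C (R := R) t) ^ N * toPS 0 D₂ := by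
      have h2 := congrArg (toPS (0 : Fin 2)) hD₂
      simp only [map_sub, map_mul, toPS_X_same, toPS_X_ne (show (1 : Fin 2) ≠ 0 by decide),
        toPS_C, map_pow, mul_zero, zero_sub, neg_mul, zero_mul] at h2
      linear_combination -h2
    -- pass e2 to the residue field
    have hmapt : PowerSeries.map (Ideal.Quotient.mk (Ideal.span {t}))
        ((PowerSeries.C (R := R) t) ^ N) = 0 := by
      rw [map_pow, PowerSeries.map_C, kappa_t, map_zero, zero_pow (by omega : N ≠ 0)]
    have e2k := congrArg (PowerSeries.map (Ideal.Quotient.mk (Ideal.span {t}))) e2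
    rw [map_mul, map_add, map_mul, hmapt, zero_mul, add_zero, PowerSeries.map_X] at e2k
    -- split ΛG = C c₀ + X·G₁
    set LG := toPS (0 : Fin 2) G with hLG
    set G₁ : PowerSeries R := PowerSeries.mk fun n => PowerSeries.coeff (R := R) (n+1) LG with hG₁
    have hsplit : LG = PowerSeries.C (R := R) (MvPowerSeries.coeff 0 G) + PowerSeries.X * G₁ := by
      ext n
      cases n with
      | zero =>
        rw [map_add, PowerSeries.coeff_zero_X_mul, add_zero, PowerSeries.coeff_zero_C,
          hLG, toPS_coeff]
        simp
      | succ n =>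
        rw [map_add, PowerSeries.coeff_succ_X_mul, PowerSeries.coeff_C, if_neg
          (Nat.succ_ne_zero n), zero_add, hG₁, PowerSeries.coeff_mk]
    have hkc0 : (Ideal.Quotient.mk (Ideal.span {t})) (MvPowerSeries.coeff 0 G) = 0 := by
      rw [Ideal.Quotient.eq_zero_iff_mem, Ideal.mem_span_singleton]
      exact hdvd
    -- G₁ is a unit
    have hG₁unit : IsUnit G₁ := by
      rw [hsplit] at e2k
      simp only [map_add, map_mul, PowerSeries.map_C, hkc0, map_zero, zero_add,
        PowerSeries.map_X, mul_assoc] at e2k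
      have hcan : PowerSeries.map (Ideal.Quotient.mk (Ideal.span {t})) G₁ *
          PowerSeries.map (Ideal.Quotient.mk (Ideal.span {t}))
            (toPS (0 : Fin 2) W) = 1 := by
        have := mul_left_cancel₀ (PowerSeries.X_ne_zero :
          (PowerSeries.X : PowerSeries (R ⧸ Ideal.span {t})) ≠ 0) (e2k.trans (mul_one _).symm)
        exact this
      have hcunit : IsUnit (PowerSeries.constantCoeff (R := _)
          (PowerSeries.map (Ideal.Quotient.mk (Ideal.span {t})) G₁)) := by
        refine IsUnit.of_mul_eq_one (PowerSeries.constantCoeff (R := _)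
          (PowerSeries.map (Ideal.Quotient.mk (Ideal.span {t})) (toPS (0 : Fin 2) W))) ?_
        rw [← map_mul, hcan, map_one]
      rw [PowerSeries.isUnit_iff_constantCoeff]
      have hb : ¬ t ∣ PowerSeries.coeff (R := R) 0 G₁ := by
        intro hbd
        rw [← PowerSeries.coeff_zero_eq_constantCoeff_apply, PowerSeries.coeff_map] at hcunit
        have : (Ideal.Quotient.mk (Ideal.span {t})) (PowerSeries.coeff (R := R) 0 G₁) = 0 := by
          rw [Ideal.Quotient.eq_zero_iff_mem, Ideal.mem_span_singleton]
          exact hbd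
        rw [this] at hcunit
        exact not_isUnit_zero hcunit
      rw [← PowerSeries.coeff_zero_eq_constantCoeff_apply]
      exact isUnit_of_not_dvd ht hb
    obtain ⟨u₁, hu₁⟩ := hG₁unit
    obtain ⟨c₀', hc₀⟩ := hdvd
    -- assemble the CORE equation
    have hCmul : PowerSeries.C (R := R) (t * c₀') = PowerSeries.C (R := R) t * PowerSeries.C (R := R) c₀' :=
      map_mul _ _ _
    have hinv : G₁ * ↑u₁⁻¹ = 1 := by
      rw [← hu₁, Units.mul_inv]
    have hfinal : (PowerSeries.X + PowerSeries.C (R := R) t *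
        (PowerSeries.C (R := R) c₀' * (↑u₁⁻¹ : PowerSeries R))) *
        toPS 0 U = (PowerSeries.C (R := R) t) ^ r * (↑u₁⁻¹ : PowerSeries R) +
        (PowerSeries.C (R := R) t) ^ N * ((↑u₁⁻¹ : PowerSeries R) * toPS 0 D₁) := by
      rw [hsplit, hc₀, hCmul] at e1
      linear_combination (↑u₁⁻¹ : PowerSeries R) * e1 - PowerSeries.X * toPS 0 U * hinv
    exact core_lemma ht r N (PowerSeries.C (R := R) c₀' * (↑u₁⁻¹ : PowerSeries R)) (toPS 0 U)
      ((↑u₁⁻¹ : PowerSeries R) * toPS 0 D₁) (↑u₁⁻¹ : PowerSeries R) u₁⁻¹.isUnit hrN hfinal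

section Loc

variable (hP : (P R t N).IsPrime)

instance (I : Ideal (Localization (@Ideal.primeCompl _ _ (P R t N) hP))) : I.IsTwoSided :=
  ⟨fun b ha => mul_comm b _ ▸ I.mul_mem_left b ha⟩

theorem x_mem_P : xel R t N ∈ P R t N := by
  rw [P_def]
  exact Ideal.subset_span (Set.mem_insert _ _)

theorem t_mem_P : tb t N ∈ P R t N := by
  rw [P_def]
  exact Ideal.subset_span (Set.mem_insert_of_mem _ rfl)

noncomputable abbrev lphi : A R t N →+*
    Localization (@Ideal.primeCompl _ _ (P R t N) hP) :=
  algebraMap (A R t N) (Localization (@Ideal.primeCompl _ _ (P R t N) hP))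

theorem phi_x_eq (ht : Irreducible t) (hN : 1 ≤ N) :
    ∃ v, lphi t N hP (xel R t N) = lphi t N hP (tb t N) ^ N * v := by
  obtain ⟨v, hv⟩ := (IsLocalization.map_units
    (Localization (@Ideal.primeCompl _ _ (P R t N) hP))
    (⟨yel t N, y_not_mem_P t N ht hN⟩ : (@Ideal.primeCompl _ _ (P R t N) hP))).exists_right_inv
  refine ⟨v, ?_⟩
  calc lphi t N hP (xel R t N)
      = lphi t N hP (xel R t N) * (lphi t N hP (yel t N) * v) := by
        rw [show lphi t N hP (yel t N) = lphi t N hP ((⟨yel t N, y_not_mem_P t N ht hN⟩ :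
          (@Ideal.primeCompl _ _ (P R t N) hP)) : A R t N) from rfl, hv, mul_one]
    _ = lphi t N hP (xel R t N * yel t N) * v := by rw [map_mul]; ring
    _ = lphi t N hP (tb t N) ^ N * v := by rw [xy_eq]; simp only [map_pow]

theorem phi_x_mem (ht : Irreducible t) (hN : 1 ≤ N) :
    lphi t N hP (xel R t N) ∈ (Ideal.map (lphi t N hP) (P R t N)) ^ N := by
  obtain ⟨v, hv⟩ := phi_x_eq t N hP ht hN
  rw [hv]
  exact Ideal.mul_mem_right _ _
    (Ideal.pow_mem_pow (Ideal.mem_map_of_mem _ (t_mem_P t N)) N)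

/-- Forward membership: `x^k t^j ∈ symb m` whenever `m ≤ Nk + j`. -/
theorem mem_symb_of (ht : Irreducible t) (hN : 1 ≤ N) (k j m : ℕ) (hle : m ≤ N * k + j) :
    xel R t N ^ k * tb t N ^ j ∈ symb R t N hP m := by
  simp only [symb, Ideal.mem_comap, map_mul, map_pow]
  refine Ideal.pow_le_pow_right hle ?_
  rw [Ideal.IsTwoSided.pow_add]
  refine Ideal.mul_mem_mul ?_ ?_
  · clear hle
    induction k with
    | zero => rw [pow_zero, mul_zero, Submodule.pow_zero, Ideal.one_eq_top]; exact Submodule.mem_top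
    | succ k IH =>
      rw [pow_succ, Nat.mul_succ, Ideal.IsTwoSided.pow_add]
      exact Ideal.mul_mem_mul IH (phi_x_mem t N hP ht hN)
  · exact Ideal.pow_mem_pow (Ideal.mem_map_of_mem _ (t_mem_P t N)) j

theorem symb_mono {m m' : ℕ} (h : m' ≤ m) : symb R t N hP m ≤ symb R t N hP m' :=
  Ideal.comap_mono (Ideal.pow_le_pow_right h)

theorem symb_exists (ht : Irreducible t) (hN : 1 ≤ N) (m : ℕ) {a : A R t N}
    (ha : a ∈ symb R t N hP m) :
    ∃ s b, s ∉ P R t N ∧ s * a = tb t N ^ m * b := by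
  haveI := hP
  rw [symb, Ideal.mem_comap] at ha
  have hle : (Ideal.map (lphi t N hP) (P R t N)) ^ m ≤
      Ideal.map (lphi t N hP) (Ideal.span {tb t N ^ m}) := by
    have h1 : Ideal.map (lphi t N hP) (P R t N) ≤ Ideal.span {lphi t N hP (tb t N)} := by
      have hPd : P R t N = Ideal.span {xel R t N, tb t N} := P_def t N
      refine le_trans (le_of_eq (congrArg (Ideal.map (lphi t N hP)) hPd)) ?_
      rw [Ideal.map_span, Set.image_insert_eq, Set.image_singleton, Ideal.span_le]
      rintro z (rfl | hz)
      · obtain ⟨v, hv⟩ := phi_x_eq t N hP ht hN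
        rw [hv, SetLike.mem_coe]
        exact Ideal.mul_mem_right _ _ (Ideal.pow_mem_of_mem _ (Ideal.subset_span (Set.mem_singleton _)) N (by omega))
      · rcases hz with rfl
        exact Ideal.subset_span (Set.mem_singleton _)
    calc (Ideal.map (lphi t N hP) (P R t N)) ^ m ≤ (Ideal.span {lphi t N hP (tb t N)}) ^ m :=
          Ideal.pow_right_mono h1 m
      _ = Ideal.span {lphi t N hP (tb t N) ^ m} := (Ideal.span_singleton_pow _ m)
      _ = Ideal.map (lphi t N hP) (Ideal.span {tb t N ^ m}) := by
          rw [Ideal.map_span, Set.image_singleton]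
          simp only [map_pow]
  have hmem := hle ha
  obtain ⟨⟨i, s⟩, his⟩ := (IsLocalization.mem_map_algebraMap_iff
    (@Ideal.primeCompl _ _ (P R t N) hP)
    (Localization (@Ideal.primeCompl _ _ (P R t N) hP))).mp hmem
  have heq : lphi t N hP (a * (s : A R t N)) = lphi t N hP (i : A R t N) := by
    rw [map_mul]
    exact his
  obtain ⟨c, hc⟩ := (IsLocalization.eq_iff_exists
    (@Ideal.primeCompl _ _ (P R t N) hP)
    (Localization (@Ideal.primeCompl _ _ (P R t N) hP))).mp heq
  have hci : (c : A R t N) * (i : A R t N) ∈ Ideal.span {tb t N ^ m} :=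
    Ideal.mul_mem_left _ _ i.2
  rw [Ideal.mem_span_singleton] at hci
  obtain ⟨b, hb⟩ := hci
  refine ⟨(c : A R t N) * (s : A R t N), b, mul_mem c.2 s.2, ?_⟩
  calc (c : A R t N) * (s : A R t N) * a = (c : A R t N) * (a * (s : A R t N)) := by ring
    _ = (c : A R t N) * (i : A R t N) := hc
    _ = tb t N ^ m * b := hb

theorem symb_eq_span (ht : Irreducible t) (hN : 1 ≤ N) (k : ℕ) :
    symb R t N hP (N * k) = Ideal.span {xel R t N ^ k} := by
  refine le_antisymm ?_ ?_
  · intro a ha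
    obtain ⟨s, b, hs, heq⟩ := symb_exists t N hP ht hN (N * k) ha
    exact mem_x_pow t N ht hN k a b s hs heq
  · rw [Ideal.span_le, Set.singleton_subset_iff]
    have := mem_symb_of t N hP ht hN k 0 (N * k) (by omega)
    simpa using this

end Loc

end Stmt17Aux2


open Stmt17Aux Stmt17Aux2

open Statement17 in
/-- Let `A = R̂⟦x,y⟧/(xy - t^N)`, `N ≥ 1`, where `R̂` is a complete
discrete valuation ring with uniformizer `t`, and let `Y_w ⊂ Spec A` be the Weil divisor
defined by the prime `P = (x,t)`.  Then `div(x) = N·Y_w` (that is, `x` has order exactly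
`N` along `Y_w` and its divisor is supported on `Y_w` only), and for `M ∈ ℤ` the Weil
divisor `M·Y_w` is Cartier — i.e. its divisorial ideal, the symbolic power `P^{(|M|)}`,
is (locally) principal — if and only if `N` divides `M`. -/
theorem statement17 (R : Type u) [CommRing R] [IsDomain R] [IsDiscreteValuationRing R]
    [IsAdicComplete (IsLocalRing.maximalIdeal R) R]
    (t : R) (ht : Irreducible t) (N : ℕ) (hN : 1 ≤ N)
    (hP : (P R t N).IsPrime) :
    (xel R t N ∈ symb R t N hP N ∧ xel R t N ∉ symb R t N hP (N + 1) ∧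
      ∀ Q ∈ (Ideal.span {xel R t N}).minimalPrimes, Q = P R t N) ∧
    ∀ M : ℤ, (symb R t N hP M.natAbs).IsPrincipal ↔ (N : ℤ) ∣ M := by
  have hxy : xel R t N * yel t N = tb t N ^ N := xy_eq t N
  refine ⟨⟨?_, ?_, ?_⟩, ?_⟩
  · -- x ∈ symb N
    have := mem_symb_of t N hP ht hN 1 0 N (by omega)
    simpa using this
  · -- x ∉ symb (N+1)
    intro hmem
    obtain ⟨s, b, hs, heq⟩ := symb_exists t N hP ht hN (N + 1) hmem
    have hcalc : tb t N ^ N * s = tb t N ^ N * (tb t N * (b * yel t N)) := by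
      linear_combination yel t N * heq - s * hxy
    have hseq := tpow_cancel t N ht hN N hcalc
    exact hs (by rw [hseq]; exact Ideal.mul_mem_right _ _ (t_mem_P t N))
  · -- minimal primes of (x)
    intro Q hQ
    have hQp : Q.IsPrime := hQ.1.1
    have hxQ : xel R t N ∈ Q := hQ.1.2 (Ideal.subset_span rfl)
    have htQN : tb t N ^ N ∈ Q := by
      have := Ideal.mul_mem_right (yel t N) Q hxQ
      rwa [hxy] at this
    have htQ : tb t N ∈ Q := hQp.mem_of_pow_mem N htQN
    have hPQ : P R t N ≤ Q := by
      rw [P_def, Ideal.span_le]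
      rintro z (rfl | hz)
      · exact hxQ
      · rcases hz with rfl
        exact htQ
    have hQP : Q ≤ P R t N := hQ.2
      ⟨hP, Ideal.span_le.mpr (Set.singleton_subset_iff.mpr (x_mem_P t N))⟩ hPQ
    exact le_antisymm hQP hPQ
  · intro M
    have hiff : ((N : ℤ) ∣ M) ↔ N ∣ M.natAbs := by
      rw [← Int.natAbs_dvd_natAbs, Int.natAbs_natCast]
    rw [hiff]
    constructor
    · intro hpr
      by_contra hnd
      obtain ⟨f, hf⟩ := hpr.principal
      rw [Ideal.submodule_span_eq] at hf
      obtain ⟨k, r, hm, hr0, hrN⟩ : ∃ k r, N * k + r = M.natAbs ∧ 0 < r ∧ r < N :=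
        ⟨M.natAbs / N, M.natAbs % N, Nat.div_add_mod _ N,
          Nat.pos_of_ne_zero (fun h => hnd (Nat.dvd_of_mod_eq_zero h)),
          Nat.mod_lt _ (by omega)⟩
      obtain ⟨r', rfl⟩ : ∃ r', r = r' + 1 := ⟨r - 1, by omega⟩
      have hfm : f ∈ symb R t N hP M.natAbs := by
        rw [hf]
        exact Ideal.subset_span rfl
      have hfk : f ∈ Ideal.span {xel R t N ^ k} := by
        have h1 : f ∈ symb R t N hP (N * k) := symb_mono t N hP (by omega) hfm
        obtain ⟨s, b, hs, heq⟩ := symb_exists t N hP ht hN (N * k) h1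
        exact mem_x_pow t N ht hN k f b s hs heq
      obtain ⟨g, hg⟩ := Ideal.mem_span_singleton.mp hfk
      have hx1 : xel R t N ^ (k + 1) ∈ Ideal.span {f} := by
        rw [← hf]
        have := mem_symb_of t N hP ht hN (k + 1) 0 M.natAbs
          (by simp only [Nat.mul_succ]; omega)
        simpa using this
      obtain ⟨w, hw⟩ := Ideal.mem_span_singleton.mp hx1
      have hweq : xel R t N = g * w := by
        apply xpow_cancel t N ht hN k
        calc xel R t N ^ k * xel R t N = xel R t N ^ (k + 1) := (pow_succ _ _).symm
          _ = f * w := hw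
          _ = xel R t N ^ k * (g * w) := by rw [hg]; ring
      have hx2 : xel R t N ^ k * tb t N ^ (r' + 1) ∈ Ideal.span {f} := by
        rw [← hf]
        exact mem_symb_of t N hP ht hN k (r' + 1) M.natAbs (le_of_eq hm.symm)
      obtain ⟨u', hu'⟩ := Ideal.mem_span_singleton.mp hx2
      have hueq : tb t N ^ (r' + 1) = g * u' := by
        apply xpow_cancel t N ht hN k
        calc xel R t N ^ k * tb t N ^ (r' + 1) = f * u' := hu'
          _ = xel R t N ^ k * (g * u') := by rw [hg]; ring
      have hg_unit := gdiv t N ht hN (Nat.succ_pos r') hrN hueq hweq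
      obtain ⟨gu, hgu⟩ := hg_unit
      have hxk : xel R t N ^ k ∈ symb R t N hP M.natAbs := by
        rw [hf, Ideal.mem_span_singleton]
        exact ⟨(↑gu⁻¹ : A R t N),
          by rw [hg, ← hgu, mul_assoc, Units.mul_inv, mul_one]⟩
      obtain ⟨s, b, hs, heq⟩ := symb_exists t N hP ht hN M.natAbs hxk
      rw [← hm] at heq
      have hpow : xel R t N ^ k * yel t N ^ k = tb t N ^ (N * k) := by
        rw [← mul_pow, hxy, ← pow_mul]
      have hcalc : tb t N ^ (N * k) * s =
          tb t N ^ (N * k) * (tb t N * (tb t N ^ r' * (b * yel t N ^ k))) := by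
        linear_combination yel t N ^ k * heq - s * hpow
      have hseq := tpow_cancel t N ht hN (N * k) hcalc
      exact hs (by rw [hseq]; exact Ideal.mul_mem_right _ _ (t_mem_P t N))
    · intro hd
      obtain ⟨k, hk⟩ := hd
      refine ⟨⟨xel R t N ^ k, ?_⟩⟩
      rw [hk, symb_eq_span t N hP ht hN k]
end
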